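/- arXiv:0903.5167 — 5 statements merged into one kernel-verified Lean document; each statement's English description precedes it below -/
import Mathlib

section
/- Let n ≥ 0 and let Γ ⊆ ℕ^{n+1} be a finitely generated subsemigroup of (ℕ^{n+1}, +) which generates ℤ^{n+1} as a group. Then there exists an element z ∈ Σ(Γ) such that (z + Σ(Γ)) ∩ ℤ^{n+1} ⊆ Γ. -/
open Set

/-- The image of a vector of natural numbers in Euclidean space. -/
noncomputable def toR (n : ℕ) (α : Fin (n + 1) → ℕ) : EuclideanSpace ℝ (Fin (n + 1)) :=
  WithLp.toLp 2 (fun i => (α i : ℝ))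

/-- The smallest closed convex cone containing a set `S` in `ℝ^{n+1}`. -/
def closedConvexCone (n : ℕ) (S : Set (EuclideanSpace ℝ (Fin (n + 1)))) :
    Set (EuclideanSpace ℝ (Fin (n + 1))) :=
  ⋂₀ {C | S ⊆ C ∧ IsClosed C ∧ Convex ℝ C ∧ ∀ c : ℝ, 0 ≤ c → ∀ x ∈ C, c • x ∈ C}

/-- Coordinates are bounded by the Euclidean norm. -/
lemma abs_coord_le_norm {m : ℕ} (v : EuclideanSpace ℝ (Fin m)) (i : Fin m) :
    |v i| ≤ ‖v‖ := by
  rw [EuclideanSpace.norm_eq]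
  have h1 : |v i| = Real.sqrt (‖v i‖ ^ 2) := by
    rw [Real.sqrt_sq (norm_nonneg _), Real.norm_eq_abs]
  rw [h1]
  exact Real.sqrt_le_sqrt
    (Finset.single_le_sum (fun j _ => sq_nonneg ‖v j‖) (Finset.mem_univ i))

/-- **Khovanskii's theorem.** If `Γ ⊆ ℕ^{n+1}` is a finitely generated subsemigroup
generating `ℤ^{n+1}` as a group, then there is `z ∈ Σ(Γ)` with
`(z + Σ(Γ)) ∩ ℤ^{n+1} ⊆ Γ`. -/
theorem khovanskii (n : ℕ) (Γ : AddSubsemigroup (Fin (n + 1) → ℕ))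
    (hfg : ∃ S : Finset (Fin (n + 1) → ℕ),
      AddSubsemigroup.closure (S : Set (Fin (n + 1) → ℕ)) = Γ)
    (hgen : AddSubgroup.closure
      ((fun α : Fin (n + 1) → ℕ => fun i => (α i : ℤ)) '' (Γ : Set (Fin (n + 1) → ℕ))) = ⊤) :
    ∃ z ∈ closedConvexCone n (toR n '' (Γ : Set (Fin (n + 1) → ℕ))),
      ∀ w : Fin (n + 1) → ℤ,
        (show EuclideanSpace ℝ (Fin (n + 1)) from WithLp.toLp 2 (fun i => (w i : ℝ))) ∈
          (fun y => z + y) '' closedConvexCone n (toR n '' (Γ : Set (Fin (n + 1) → ℕ))) →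
        ∃ a ∈ Γ, ∀ i, (a i : ℤ) = w i := by
  classical
  obtain ⟨S, hS⟩ := hfg
  set N : AddSubmonoid (Fin (n + 1) → ℕ) :=
    AddSubmonoid.closure (S : Set (Fin (n + 1) → ℕ)) with hNdef
  -- Γ is contained in N
  have hΓN : ∀ a ∈ Γ, a ∈ N := by
    intro a ha
    rw [← hS] at ha
    exact AddSubsemigroup.closure_le (S := N.toAddSubsemigroup) |>.mpr
      (fun x hx => AddSubmonoid.subset_closure hx) ha
  -- adding an element of N to an element of Γ stays in Γ
  have hNΓ : ∀ m ∈ N, ∀ g ∈ Γ, g + m ∈ Γ := by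
    intro m hm
    induction hm using AddSubmonoid.closure_induction with
    | mem x hx =>
      intro g hg
      exact Γ.add_mem hg (by rw [← hS]; exact AddSubsemigroup.subset_closure hx)
    | zero => intro g hg; simpa using hg
    | add a b ha hb iha ihb =>
      intro g hg
      have h1 : g + a ∈ Γ := iha g hg
      have h2 : (g + a) + b ∈ Γ := ihb _ h1
      simpa [add_assoc] using h2
  -- Γ is nonempty
  have hne : ∃ g, g ∈ Γ := by
    by_contra h
    push_neg at h
    have hemp : ((fun α : Fin (n + 1) → ℕ => fun i => (α i : ℤ)) ''
        (Γ : Set (Fin (n + 1) → ℕ))) = ∅ := by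
      rw [Set.eq_empty_iff_forall_notMem]
      rintro v ⟨γ, hγ, -⟩
      exact h γ hγ
    rw [hemp, AddSubgroup.closure_empty] at hgen
    have h1 : (fun _ : Fin (n + 1) => (1 : ℤ)) ∈ (⊥ : AddSubgroup (Fin (n + 1) → ℤ)) := by
      rw [hgen]; trivial
    rw [AddSubgroup.mem_bot] at h1
    exact one_ne_zero (congrFun h1 0)
  obtain ⟨g, hg⟩ := hne
  -- every integer vector is a difference of two elements of N
  have hdec : ∀ v : Fin (n + 1) → ℤ, ∃ p q, p ∈ N ∧ q ∈ N ∧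
      ∀ i, (p i : ℤ) - (q i : ℤ) = v i := by
    intro v
    have hv : v ∈ AddSubgroup.closure
        ((fun α : Fin (n + 1) → ℕ => fun i => (α i : ℤ)) ''
          (Γ : Set (Fin (n + 1) → ℕ))) := by
      rw [hgen]; trivial
    induction hv using AddSubgroup.closure_induction with
    | mem x hx =>
      obtain ⟨γ, hγ, rfl⟩ := hx
      exact ⟨γ, 0, hΓN γ hγ, zero_mem N, fun i => by simp⟩
    | zero => exact ⟨0, 0, zero_mem N, zero_mem N, fun i => by simp⟩
    | add a b ha hb iha ihb =>
      obtain ⟨p1, q1, hp1, hq1, h1⟩ := iha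
      obtain ⟨p2, q2, hp2, hq2, h2⟩ := ihb
      exact ⟨p1 + p2, q1 + q2, add_mem hp1 hp2, add_mem hq1 hq2, fun i => by
        simp only [Pi.add_apply, Nat.cast_add]
        rw [← h1 i, ← h2 i]; ring⟩
    | neg a ha iha =>
      obtain ⟨p, q, hp, hq, h1⟩ := iha
      exact ⟨q, p, hq, hp, fun i => by
        simp only [Pi.neg_apply]
        rw [← h1 i]; ring⟩
  choose P Q hPN hQN hPQ using hdec
  -- the set of nonnegative combinations of S
  set D : Set (EuclideanSpace ℝ (Fin (n + 1))) :=
    {v | ∃ c : (Fin (n + 1) → ℕ) → ℝ, (∀ s, 0 ≤ c s) ∧ v = ∑ s ∈ S, c s • toR n s}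
    with hDdef
  have hD0 : (0 : EuclideanSpace ℝ (Fin (n + 1))) ∈ D :=
    ⟨0, fun s => le_refl 0, by simp⟩
  have hDadd : ∀ v ∈ D, ∀ u ∈ D, v + u ∈ D := by
    rintro v ⟨c, hc, rfl⟩ u ⟨d, hd, rfl⟩
    exact ⟨c + d, fun s => add_nonneg (hc s) (hd s), by
      rw [← Finset.sum_add_distrib]
      exact Finset.sum_congr rfl fun s _ => by simp [add_smul]⟩
  have hDsmul : ∀ t : ℝ, 0 ≤ t → ∀ v ∈ D, t • v ∈ D := by
    rintro t ht v ⟨c, hc, rfl⟩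
    exact ⟨t • c, fun s => mul_nonneg ht (hc s), by
      rw [Finset.smul_sum]
      exact Finset.sum_congr rfl fun s _ => by simp [smul_smul]⟩
  have hDconv : Convex ℝ D := by
    intro v hv u hu a b ha hb hab
    exact hDadd _ (hDsmul a ha v hv) _ (hDsmul b hb u hu)
  -- toR is additive
  have htoRadd : ∀ a b : Fin (n + 1) → ℕ, toR n (a + b) = toR n a + toR n b := by
    intro a b
    ext i
    show ((a i + b i : ℕ) : ℝ) = (a i : ℝ) + (b i : ℝ)
    push_cast; ring
  -- toR '' Γ ⊆ D
  have hΓD : ∀ γ ∈ Γ, toR n γ ∈ D := by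
    intro γ hγ
    rw [← hS] at hγ
    induction hγ using AddSubsemigroup.closure_induction with
    | mem x hx =>
      refine ⟨fun s => if s = x then 1 else 0, fun s => by positivity, ?_⟩
      show toR n x = ∑ s ∈ S, (if s = x then (1 : ℝ) else 0) • toR n s
      simp only [ite_smul, one_smul, zero_smul]
      rw [Finset.sum_ite_eq' S x (toR n)]
      rw [if_pos (by exact_mod_cast hx)]
    | add a b ha hb iha ihb =>
      rw [htoRadd]
      exact hDadd _ iha _ ihb
  -- the cone is contained in the closure of D
  set Sig := closedConvexCone n (toR n '' (Γ : Set (Fin (n + 1) → ℕ))) with hSigdef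
  have hSigD : Sig ⊆ closure D := by
    apply sInter_subset_of_mem
    refine ⟨?_, isClosed_closure, hDconv.closure, ?_⟩
    · rintro v ⟨γ, hγ, rfl⟩
      exact subset_closure (hΓD γ hγ)
    · intro t ht x hx
      exact map_mem_closure (continuous_const_smul t) hx (fun v hv => hDsmul t ht v hv)
  -- elements of Γ are in the cone
  have hGamSig : ∀ γ ∈ Γ, toR n γ ∈ Sig := by
    intro γ hγ C hC
    exact hC.1 ⟨γ, hγ, rfl⟩
  -- constants
  set B : ℝ := ∑ s ∈ S, ‖toR n s‖ with hBdef
  have hB0 : 0 ≤ B := Finset.sum_nonneg fun s _ => norm_nonneg _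
  set R : ℤ := ⌈(1 + B : ℝ)⌉ with hRdef
  set F : Finset (Fin (n + 1) → ℤ) :=
    Fintype.piFinset (fun _ => Finset.Icc (-R) R) with hFdef
  -- the deep element z
  set z : Fin (n + 1) → ℕ := g + ∑ f ∈ F, Q f with hzdef
  have hQsum : (∑ f ∈ F, Q f) ∈ N := AddSubmonoid.sum_mem N fun f _ => hQN f
  have hzΓ : z ∈ Γ := hNΓ _ hQsum g hg
  refine ⟨toR n z, hGamSig z hzΓ, ?_⟩
  intro w hw
  obtain ⟨x, hxSig, hxz⟩ := hw
  -- rewrite the coordinates of x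
  have hxe : ∀ i, x i = (w i : ℝ) - (z i : ℝ) := by
    intro i
    have := congrArg (fun v => v i) hxz
    simp only at this
    have h2 : (z i : ℝ) + x i = (w i : ℝ) := this
    linarith
  -- approximate x by an element of D
  have hxcl : x ∈ closure D := hSigD hxSig
  obtain ⟨x', hx'D, hdist⟩ := Metric.mem_closure_iff.mp hxcl 1 one_pos
  obtain ⟨c, hc0, rfl⟩ := hx'D
  -- the integral approximation y
  set y : Fin (n + 1) → ℕ := ∑ s ∈ S, ⌊c s⌋₊ • s with hydef
  have hyN : y ∈ N :=
    AddSubmonoid.sum_mem N fun s hs =>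
      AddSubmonoid.nsmul_mem N (AddSubmonoid.subset_closure hs) _
  -- the fractional part f
  set f : Fin (n + 1) → ℤ := fun i => w i - z i - y i with hfdef
  -- real version of f
  set fr : EuclideanSpace ℝ (Fin (n + 1)) := WithLp.toLp 2 (fun i => (f i : ℝ)) with hfrdef
  have hfr : fr = x - toR n y := by
    ext i
    show ((w i - z i - y i : ℤ) : ℝ) = x i - (y i : ℝ)
    rw [hxe i]; push_cast; ring
  -- toR n y as a sum
  have htoRy : toR n y = ∑ s ∈ S, (⌊c s⌋₊ : ℝ) • toR n s := by
    ext i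
    show ((∑ s ∈ S, ⌊c s⌋₊ • s) i : ℝ) = (∑ s ∈ S, (⌊c s⌋₊ : ℝ) • toR n s) i
    rw [Finset.sum_apply, WithLp.ofLp_sum, Finset.sum_apply, Nat.cast_sum]
    exact Finset.sum_congr rfl fun s _ => by
      show ((⌊c s⌋₊ • s i : ℕ) : ℝ) = (⌊c s⌋₊ : ℝ) • (s i : ℝ)
      simp only [smul_eq_mul]; push_cast; ring
  -- norm bound on x' - toR n y
  have hbound1 : ‖(∑ s ∈ S, c s • toR n s) - toR n y‖ ≤ B := by
    rw [htoRy, ← Finset.sum_sub_distrib]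
    have h1 : ∀ s ∈ S, c s • toR n s - (⌊c s⌋₊ : ℝ) • toR n s =
        (c s - ⌊c s⌋₊) • toR n s := fun s _ => by rw [sub_smul]
    rw [Finset.sum_congr rfl h1]
    refine le_trans (norm_sum_le _ _) ?_
    apply Finset.sum_le_sum
    intro s hs
    rw [norm_smul, Real.norm_eq_abs]
    have h2 : |c s - ⌊c s⌋₊| ≤ 1 := by
      rw [abs_le]
      constructor
      · have := Nat.floor_le (hc0 s); linarith
      · have := Nat.lt_floor_add_one (c s); linarith
    calc |c s - ⌊c s⌋₊| * ‖toR n s‖ ≤ 1 * ‖toR n s‖ :=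
          mul_le_mul_of_nonneg_right h2 (norm_nonneg _)
      _ = ‖toR n s‖ := one_mul _
  -- norm bound on f
  have hbound : ‖fr‖ < 1 + B := by
    have t1 : dist x (toR n y) ≤ dist x (∑ s ∈ S, c s • toR n s) +
        dist (∑ s ∈ S, c s • toR n s) (toR n y) := dist_triangle _ _ _
    have t2 : dist (∑ s ∈ S, c s • toR n s) (toR n y) ≤ B := by
      rw [dist_eq_norm]; exact hbound1
    have t3 : ‖fr‖ = dist x (toR n y) := by
      rw [dist_eq_norm, hfr]
    rw [t3]; linarith
  -- f is in F
  have hfF : f ∈ F := by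
    rw [hFdef, Fintype.mem_piFinset]
    intro i
    rw [Finset.mem_Icc, ← abs_le]
    have h1 : |(f i : ℝ)| ≤ ‖fr‖ := abs_coord_le_norm fr i
    have h2 : |(f i : ℝ)| ≤ (R : ℝ) :=
      le_trans h1 (le_trans (le_of_lt hbound) (Int.le_ceil _))
    have h3 : ((|f i| : ℤ) : ℝ) ≤ ((R : ℤ) : ℝ) := by rw [Int.cast_abs]; exact h2
    exact_mod_cast h3
  -- the element a
  set a : Fin (n + 1) → ℕ := g + P f + (∑ f' ∈ F.erase f, Q f') + y with hadef
  have haΓ : a ∈ Γ := by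
    apply hNΓ _ hyN
    apply hNΓ _ (AddSubmonoid.sum_mem N fun f' _ => hQN f')
    exact hNΓ _ (hPN f) g hg
  refine ⟨a, haΓ, ?_⟩
  intro i
  have hPQf : (P f i : ℤ) - (Q f i : ℤ) = w i - z i - y i := hPQ f i
  have hsplit : (∑ f' ∈ F, (Q f' i : ℤ)) =
      (Q f i : ℤ) + ∑ f' ∈ F.erase f, (Q f' i : ℤ) :=
    (Finset.add_sum_erase F (fun f' => (Q f' i : ℤ)) hfF).symm
  have hz : (z i : ℤ) = (g i : ℤ) + ∑ f' ∈ F, (Q f' i : ℤ) := by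
    rw [hzdef]
    show ((g i + (∑ f' ∈ F, Q f') i : ℕ) : ℤ) = _
    rw [Finset.sum_apply]
    push_cast
    ring
  have ha : (a i : ℤ) = (g i : ℤ) + (P f i : ℤ) +
      (∑ f' ∈ F.erase f, (Q f' i : ℤ)) + (y i : ℤ) := by
    rw [hadef]
    show ((g i + P f i + (∑ f' ∈ F.erase f, Q f') i + y i : ℕ) : ℤ) = _
    rw [Finset.sum_apply]
    push_cast
    ring
  rw [ha]
  rw [hsplit] at hz
  omega
end

section
/- Let Γ ⊆ ℕ^{n+1} be a finitely generated subsemigroup which generates ℤ^{n+1} as a group, and suppose the Okounkov body Δ(Γ) is bounded. Then there exists a constant C > 0 such that for every integer k ≥ 1: if α ∈ Δ(Γ) ∩ ((1/k)ℤ)^n and the (Euclidean) distance from α to the frontier of Δ(Γ) is greater than C/k, then α ∈ Δ_k(Γ). -/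
open Set Metric

/-- The vector `(α, t) ∈ ℝ^{n+1}` obtained from `α ∈ ℝ^n` by appending `t`. -/
noncomputable def embSnoc (n : ℕ) (α : EuclideanSpace ℝ (Fin n)) (t : ℝ) :
    EuclideanSpace ℝ (Fin (n + 1)) :=
  WithLp.toLp 2 (Fin.snoc (show Fin n → ℝ from α) t)

/-- The Okounkov body `Δ(Γ) := {α ∈ ℝ^n : (α,1) ∈ Σ(Γ)}` of a semigroup `Γ ⊆ ℕ^{n+1}`. -/
def OkounkovBody (n : ℕ) (Γ : Set (Fin (n + 1) → ℕ)) : Set (EuclideanSpace ℝ (Fin n)) :=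
  {α | embSnoc n α 1 ∈ closedConvexCone n (toR n '' Γ)}

/-- `Δ_k(Γ) := {α ∈ ℝ^n : (kα, k) ∈ Γ}`. -/
def DeltaK (n : ℕ) (Γ : Set (Fin (n + 1) → ℕ)) (k : ℕ) : Set (EuclideanSpace ℝ (Fin n)) :=
  {α | ∃ a ∈ Γ, toR n a = embSnoc n ((k : ℝ) • α) (k : ℝ)}

/-! ### Auxiliary lemmas -/

lemma OkAux_group_sub {G : Type*} [AddCommGroup G] {T : Set G} {x : G}
    (hx : x ∈ AddSubgroup.closure T) :
    ∃ p ∈ AddSubmonoid.closure T, ∃ q ∈ AddSubmonoid.closure T, x = p - q := by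
  induction hx using AddSubgroup.closure_induction with
  | mem y hy => exact ⟨y, AddSubmonoid.subset_closure hy, 0, zero_mem _, by simp⟩
  | zero => exact ⟨0, zero_mem _, 0, zero_mem _, by simp⟩
  | add a b _ _ ha hb =>
      obtain ⟨p, hp, q, hq, rfl⟩ := ha
      obtain ⟨p', hp', q', hq', rfl⟩ := hb
      exact ⟨p + p', add_mem hp hp', q + q', add_mem hq hq', by abel⟩
  | neg a _ ha =>
      obtain ⟨p, hp, q, hq, rfl⟩ := ha
      exact ⟨q, hq, p, hp, by abel⟩

lemma OkAux_mono_sg {n : ℕ} {S : Set (Fin (n+1) → ℕ)} {x : Fin (n+1) → ℕ}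
    (hx : x ∈ AddSubmonoid.closure S) (hne : x ≠ 0) : x ∈ AddSubsemigroup.closure S := by
  induction hx using AddSubmonoid.closure_induction with
  | mem y hy => exact AddSubsemigroup.subset_closure hy
  | zero => exact absurd rfl hne
  | add a b ha hb iha ihb =>
      rcases eq_or_ne a 0 with rfl | ha0
      · rw [zero_add] at hne ⊢; exact ihb hne
      rcases eq_or_ne b 0 with rfl | hb0
      · rw [add_zero] at hne ⊢; exact iha hne
      exact add_mem (iha ha0) (ihb hb0)

lemma OkAux_mclosure_eq {n : ℕ} (S : Set (Fin (n+1) → ℕ)) :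
    AddSubmonoid.closure ((AddSubsemigroup.closure S :
        AddSubsemigroup (Fin (n+1) → ℕ)) : Set (Fin (n+1) → ℕ))
      = AddSubmonoid.closure S := by
  apply le_antisymm
  · rw [AddSubmonoid.closure_le]
    intro x hx
    induction hx using AddSubsemigroup.closure_induction with
    | mem y hy => exact AddSubmonoid.subset_closure hy
    | add a b _ _ iha ihb => exact add_mem iha ihb
  · exact AddSubmonoid.closure_mono AddSubsemigroup.subset_closure

lemma OkAux_ball_subset {E : Type*} [NormedAddCommGroup E] [NormedSpace ℝ E]
    {S : Set E} {α β : E} (hα : α ∈ S) (h : dist β α < infDist α (frontier S)) : β ∈ S := by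
  have hpos : 0 < infDist α (frontier S) := lt_of_le_of_lt dist_nonneg h
  have hball : ball α (infDist α (frontier S)) ⊆ (frontier S)ᶜ := by
    intro x hx
    simp only [mem_compl_iff]
    intro hxf
    have h1 : infDist α (frontier S) ≤ dist α x := infDist_le_dist_of_mem hxf
    rw [mem_ball, dist_comm] at hx
    exact absurd h1 (not_le.2 hx)
  have hsub : ball α (infDist α (frontier S)) ⊆ interior S ∪ interior Sᶜ := by
    intro x hx
    have hnf := hball hx
    rcases em (x ∈ closure S) with hc | hc
    · exact Or.inl (by by_contra hni; exact hnf ⟨hc, hni⟩)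
    · exact Or.inr (by rwa [interior_compl, mem_compl_iff])
  have hαi : α ∈ interior S := by
    rcases hsub (mem_ball_self hpos) with h1 | h1
    · exact h1
    · rw [interior_compl, mem_compl_iff] at h1
      exact absurd (subset_closure hα) h1
  have hdisj : Disjoint (interior S) (interior Sᶜ) := by
    rw [interior_compl]
    exact disjoint_compl_right.mono_left interior_subset_closure
  have hfin : ball α (infDist α (frontier S)) ⊆ interior S :=
    (convex_ball α _).isPreconnected.subset_left_of_subset_union isOpen_interior
      isOpen_interior hdisj hsub ⟨α, mem_ball_self hpos, hαi⟩
  exact interior_subset (hfin (by rwa [mem_ball]))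

lemma OkAux_ccc_subset (n : ℕ) (S : Set (EuclideanSpace ℝ (Fin (n + 1)))) :
    S ⊆ closedConvexCone n S := fun x hx _C hC => hC.1 hx

lemma OkAux_ccc_smul (n : ℕ) (S : Set (EuclideanSpace ℝ (Fin (n + 1)))) {c : ℝ} (hc : 0 ≤ c)
    {x} (hx : x ∈ closedConvexCone n S) : c • x ∈ closedConvexCone n S :=
  fun C hC => hC.2.2.2 c hc x (hx C hC)

lemma OkAux_ccc_min (n : ℕ) (S : Set (EuclideanSpace ℝ (Fin (n + 1))))
    {C : Set (EuclideanSpace ℝ (Fin (n + 1)))} (h1 : S ⊆ C) (h2 : IsClosed C)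
    (h3 : Convex ℝ C) (h4 : ∀ c : ℝ, 0 ≤ c → ∀ x ∈ C, c • x ∈ C) :
    closedConvexCone n S ⊆ C := fun _ hx => hx C ⟨h1, h2, h3, h4⟩

lemma OkAux_ccc_orthant (n : ℕ) (Γ : Set (Fin (n+1) → ℕ)) {x}
    (hx : x ∈ closedConvexCone n (toR n '' Γ)) (i : Fin (n+1)) : 0 ≤ x i := by
  have h := OkAux_ccc_min n (toR n '' Γ) (C := {y | ∀ j, 0 ≤ y j}) ?_ ?_ ?_ ?_
  · exact h hx i
  · rintro y ⟨a, _, rfl⟩ j; exact Nat.cast_nonneg (α := ℝ) (a j)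
  · have : {y : EuclideanSpace ℝ (Fin (n+1)) | ∀ j, 0 ≤ y j} = ⋂ j, {y | 0 ≤ y j} := by
      ext y; simp
    rw [this]
    exact isClosed_iInter fun j =>
      isClosed_le continuous_const ((EuclideanSpace.proj j).continuous)
  · intro a ha b hb s t hs ht hst j
    have h1 := ha j; have h2 := hb j
    simp only [PiLp.add_apply, PiLp.smul_apply, smul_eq_mul]
    exact add_nonneg (mul_nonneg hs h1) (mul_nonneg ht h2)
  · intro c hc y hy j
    simp only [PiLp.smul_apply, smul_eq_mul]
    exact mul_nonneg hc (hy j)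

noncomputable def OkAux_fgcone (n : ℕ) (S : Finset (Fin (n+1) → ℕ)) :
    Set (EuclideanSpace ℝ (Fin (n + 1))) :=
  {x | ∃ c : (Fin (n+1) → ℕ) → ℝ, (∀ s, 0 ≤ c s) ∧ x = ∑ s ∈ S, c s • toR n s}

lemma OkAux_toR_add (n : ℕ) (a b : Fin (n+1) → ℕ) : toR n (a + b) = toR n a + toR n b := by
  ext i
  simp [toR]

lemma OkAux_fgcone_add (n : ℕ) (S : Finset (Fin (n+1) → ℕ)) {x y} (hx : x ∈ OkAux_fgcone n S)
    (hy : y ∈ OkAux_fgcone n S) : x + y ∈ OkAux_fgcone n S := by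
  obtain ⟨c, hc, rfl⟩ := hx
  obtain ⟨d, hd, rfl⟩ := hy
  exact ⟨c + d, fun s => add_nonneg (hc s) (hd s), by
    rw [← Finset.sum_add_distrib]; congr 1; funext s; rw [Pi.add_apply, add_smul]⟩

lemma OkAux_fgcone_smul (n : ℕ) (S : Finset (Fin (n+1) → ℕ)) {c : ℝ} (hc : 0 ≤ c) {x}
    (hx : x ∈ OkAux_fgcone n S) : c • x ∈ OkAux_fgcone n S := by
  obtain ⟨d, hd, rfl⟩ := hx
  exact ⟨fun s => c * d s, fun s => mul_nonneg hc (hd s), by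
    rw [Finset.smul_sum]; congr 1; funext s; rw [smul_smul]⟩

lemma OkAux_fgcone_convex (n : ℕ) (S : Finset (Fin (n+1) → ℕ)) :
    Convex ℝ (OkAux_fgcone n S) := by
  intro a ha b hb s t hs ht _
  exact OkAux_fgcone_add n S (OkAux_fgcone_smul n S hs ha) (OkAux_fgcone_smul n S ht hb)

lemma OkAux_ccc_subset_closure_fgcone (n : ℕ) (S : Finset (Fin (n+1) → ℕ)) :
    closedConvexCone n (toR n '' ((AddSubsemigroup.closure (S : Set (Fin (n+1) → ℕ)) :
      AddSubsemigroup (Fin (n+1) → ℕ)) : Set (Fin (n+1) → ℕ)))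
      ⊆ closure (OkAux_fgcone n S) := by
  apply OkAux_ccc_min
  · rintro x ⟨a, ha, rfl⟩
    apply subset_closure
    induction ha using AddSubsemigroup.closure_induction with
    | mem y hy =>
        refine ⟨fun s => if s = y then 1 else 0, fun s => by positivity, ?_⟩
        simp only [ite_smul, one_smul, zero_smul, Finset.sum_ite_eq']
        rw [if_pos (Finset.mem_coe.mp hy)]
    | add a b _ _ iha ihb => rw [OkAux_toR_add]; exact OkAux_fgcone_add n S iha ihb
  · exact isClosed_closure
  · exact (OkAux_fgcone_convex n S).closure
  · intro c hc x hx
    have h1 : (fun y : EuclideanSpace ℝ (Fin (n+1)) => c • y) '' closure (OkAux_fgcone n S) ⊆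
        closure ((fun y : EuclideanSpace ℝ (Fin (n+1)) => c • y) '' OkAux_fgcone n S) :=
      image_closure_subset_closure_image (continuous_const_smul c)
    have h2 : (fun y : EuclideanSpace ℝ (Fin (n+1)) => c • y) '' OkAux_fgcone n S ⊆
        OkAux_fgcone n S := by
      rintro _ ⟨y, hy, rfl⟩; exact OkAux_fgcone_smul n S hc hy
    exact closure_mono h2 (h1 ⟨x, hx, rfl⟩)

lemma OkAux_coord_le {m : ℕ} (x : EuclideanSpace ℝ (Fin m)) (i : Fin m) : |x i| ≤ ‖x‖ := by
  rw [EuclideanSpace.norm_eq]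
  rw [show |x i| = Real.sqrt (‖x i‖^2) by rw [Real.sqrt_sq_eq_abs]; simp]
  exact Real.sqrt_le_sqrt (Finset.single_le_sum
    (f := fun j => ‖x j‖ ^ 2) (fun j _ => by positivity) (Finset.mem_univ _))

lemma OkAux_norm_init_le (n : ℕ) (u : EuclideanSpace ℝ (Fin (n+1))) :
    ‖(WithLp.toLp 2 (fun i => u (Fin.castSucc i)) : EuclideanSpace ℝ (Fin n))‖ ≤ ‖u‖ := by
  rw [EuclideanSpace.norm_eq, EuclideanSpace.norm_eq]
  apply Real.sqrt_le_sqrt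
  rw [Fin.sum_univ_castSucc]
  exact le_add_of_nonneg_right (by positivity)

lemma OkAux_deep_mem (n : ℕ) (Γ : Set (Fin (n+1) → ℕ)) (ρ r : ℝ) (k : ℕ)
    (hr : 1 ≤ r) (hρ : 0 ≤ ρ) (hk : 2*r + 2 ≤ (k:ℝ))
    (α : EuclideanSpace ℝ (Fin n))
    (hball : ∀ β : EuclideanSpace ℝ (Fin n),
      ‖β - α‖ ≤ (r*(1+ρ))/((k:ℝ) - r) → β ∈ OkounkovBody n Γ)
    (hbnd : ‖α‖ ≤ ρ)
    (u : EuclideanSpace ℝ (Fin (n+1))) (hu : ‖u‖ ≤ r) :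
    embSnoc n ((k:ℝ) • α) (k:ℝ) + u ∈ closedConvexCone n (toR n '' Γ) := by
  set s : ℝ := u (Fin.last n) with hs_def
  have hs : |s| ≤ r := le_trans (OkAux_coord_le u (Fin.last n)) hu
  have habs := abs_le.mp hs
  set t : ℝ := (k:ℝ) + s with ht_def
  have htpos : 0 < t := by nlinarith [habs.1]
  have hktr : 0 < (k:ℝ) - r := by nlinarith
  have htge : (k:ℝ) - r ≤ t := by nlinarith [habs.1]
  set uinit : EuclideanSpace ℝ (Fin n) :=
    (WithLp.toLp 2 (fun i => u (Fin.castSucc i)) : EuclideanSpace ℝ (Fin n)) with huinit_def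
  set β : EuclideanSpace ℝ (Fin n) := t⁻¹ • ((k:ℝ) • α + uinit) with hβ_def
  have htβ : t • β = (k:ℝ) • α + uinit := smul_inv_smul₀ (ne_of_gt htpos) _
  have hdiff : t • (β - α) = uinit - s • α := by
    rw [smul_sub, htβ]
    have : t • α = (k:ℝ) • α + s • α := by rw [ht_def, add_smul]
    rw [this]
    abel
  have hnorm : ‖β - α‖ ≤ (r*(1+ρ))/((k:ℝ) - r) := by
    have h1 : t * ‖β - α‖ = ‖uinit - s • α‖ := by
      rw [← hdiff, norm_smul, Real.norm_eq_abs, abs_of_pos htpos]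
    have h2 : ‖uinit - s • α‖ ≤ r + r * ρ := by
      calc ‖uinit - s • α‖ ≤ ‖uinit‖ + ‖s • α‖ := norm_sub_le _ _
        _ ≤ r + r * ρ := by
            have h5 := OkAux_norm_init_le n u
            rw [norm_smul, Real.norm_eq_abs]
            have h3 : |s| * ‖α‖ ≤ r * ρ :=
              mul_le_mul hs hbnd (norm_nonneg _) (by linarith)
            have h4 : ‖uinit‖ ≤ r := le_trans (by rw [huinit_def]; exact h5) hu
            linarith
    rw [le_div_iff₀ hktr]
    nlinarith [norm_nonneg (β - α), h1, h2, htge]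
  have hβΔ : β ∈ OkounkovBody n Γ := hball β hnorm
  have hmem : t • embSnoc n β 1 ∈ closedConvexCone n (toR n '' Γ) :=
    OkAux_ccc_smul n _ (le_of_lt htpos) hβΔ
  have heq : t • embSnoc n β 1 = embSnoc n ((k:ℝ) • α) (k:ℝ) + u := by
    ext j
    refine Fin.lastCases ?_ ?_ j
    · simp only [PiLp.smul_apply, PiLp.add_apply, embSnoc, PiLp.toLp_apply, Fin.snoc_last, smul_eq_mul]
      simp [ht_def, hs_def]
    · intro i
      have := congrArg (fun v : EuclideanSpace ℝ (Fin n) => v i) htβ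
      simp only [PiLp.smul_apply, PiLp.add_apply, embSnoc, PiLp.toLp_apply, Fin.snoc_castSucc,
        smul_eq_mul] at this ⊢
      exact this
  rw [← heq]
  exact hmem

lemma OkAux_sum_apply {ι : Type*} [DecidableEq ι] (s : Finset ι) {m : ℕ}
    (f : ι → EuclideanSpace ℝ (Fin m)) (i : Fin m) :
    (∑ x ∈ s, f x) i = ∑ x ∈ s, f x i := by
  induction s using Finset.induction with
  | empty => rfl
  | insert a s h ih => rw [Finset.sum_insert h, Finset.sum_insert h, PiLp.add_apply, ih]

noncomputable def OkAux_natIntHom (n : ℕ) : (Fin (n+1) → ℕ) →+ (Fin (n+1) → ℤ) where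
  toFun := fun a i => (a i : ℤ)
  map_zero' := by funext i; simp
  map_add' := by intro a b; funext i; simp

/-- Lattice points of `Δ(Γ)` lying at distance greater than `C/k` from the
boundary belong to `Δ_k(Γ)`. -/
theorem lattice_points_in_DeltaK (n : ℕ) (Γ : AddSubsemigroup (Fin (n + 1) → ℕ))
    (hfg : ∃ S : Finset (Fin (n + 1) → ℕ),
      AddSubsemigroup.closure (S : Set (Fin (n + 1) → ℕ)) = Γ)
    (hgen : AddSubgroup.closure
      ((fun α : Fin (n + 1) → ℕ => fun i => (α i : ℤ)) '' (Γ : Set (Fin (n + 1) → ℕ))) = ⊤)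
    (hbdd : Bornology.IsBounded (OkounkovBody n (Γ : Set (Fin (n + 1) → ℕ)))) :
    ∃ C : ℝ, 0 < C ∧ ∀ k : ℕ, 1 ≤ k →
      ∀ α : EuclideanSpace ℝ (Fin n),
        α ∈ OkounkovBody n (Γ : Set (Fin (n + 1) → ℕ)) →
        (∀ i, ∃ m : ℤ, α i = (m : ℝ) / (k : ℝ)) →
        C / (k : ℝ) < infDist α (frontier (OkounkovBody n (Γ : Set (Fin (n + 1) → ℕ)))) →
        α ∈ DeltaK n (Γ : Set (Fin (n + 1) → ℕ)) k := by
  obtain ⟨S, rfl⟩ := hfg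
  set M := AddSubmonoid.closure (S : Set (Fin (n+1) → ℕ)) with hM
  obtain ⟨ρ, hρ0, hρsub⟩ := hbdd.subset_closedBall_lt 0 0
  set R : ℝ := ∑ s ∈ S, ‖toR n s‖ with hRdef
  have hR0 : 0 ≤ R := Finset.sum_nonneg fun _ _ => norm_nonneg _
  set B : ℤ := ⌈R⌉ + 2 with hB
  set W : Finset (Fin (n+1) → ℤ) := Fintype.piFinset (fun _ => Finset.Icc (-B) B) with hW
  have key : ∀ w : Fin (n+1) → ℤ, ∃ p ∈ M, ∃ q ∈ M,
      ∀ i, w i + (q i : ℤ) = (p i : ℤ) := by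
    intro w
    have hw : w ∈ AddSubgroup.closure ((fun α : Fin (n+1) → ℕ => fun i => (α i : ℤ)) ''
        ((AddSubsemigroup.closure (S : Set (Fin (n+1) → ℕ)) :
          AddSubsemigroup (Fin (n+1) → ℕ)) : Set (Fin (n+1) → ℕ))) := by
      rw [hgen]; trivial
    obtain ⟨p', hp', q', hq', hw'⟩ := OkAux_group_sub hw
    have himg : (fun α : Fin (n+1) → ℕ => fun i => (α i : ℤ)) ''
        ((AddSubsemigroup.closure (S : Set (Fin (n+1) → ℕ)) :
          AddSubsemigroup (Fin (n+1) → ℕ)) : Set (Fin (n+1) → ℕ))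
        = ⇑(OkAux_natIntHom n) '' _ := rfl
    rw [himg, ← AddMonoidHom.map_mclosure, OkAux_mclosure_eq] at hp' hq'
    obtain ⟨p, hp, rfl⟩ := hp'
    obtain ⟨q, hq, rfl⟩ := hq'
    refine ⟨p, hp, q, hq, fun i => ?_⟩
    have := congrFun hw' i
    simp only [OkAux_natIntHom, AddMonoidHom.coe_mk, ZeroHom.coe_mk, Pi.sub_apply] at this
    omega
  choose P hP Qf hQf hPQ using key
  set Q : Fin (n+1) → ℕ := ∑ w ∈ W, Qf w with hQdef
  set r : ℝ := ‖toR n Q‖ + 1 with hrdef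
  have hr1 : 1 ≤ r := le_add_of_nonneg_left (norm_nonneg _)
  refine ⟨max (2*r*(1+ρ)) ((2*r+2)*(2*ρ+2)) + 1, ?_, ?_⟩
  · have h1 : (0:ℝ) ≤ 2*r*(1+ρ) := by nlinarith
    have h2 := le_max_left (2*r*(1+ρ)) ((2*r+2)*(2*ρ+2))
    linarith
  intro k hk1 α hαΔ hrat hdist
  set C : ℝ := max (2*r*(1+ρ)) ((2*r+2)*(2*ρ+2)) + 1 with hC
  have kpos : (0:ℝ) < k := by exact_mod_cast hk1
  have hsig : embSnoc n α 1 ∈ closedConvexCone n (toR n ''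
      ((AddSubsemigroup.closure (S : Set (Fin (n+1) → ℕ)) :
        AddSubsemigroup (Fin (n+1) → ℕ)) : Set (Fin (n+1) → ℕ))) := hαΔ
  have hα_norm : ‖α‖ ≤ ρ := mem_closedBall_zero_iff.mp (hρsub hαΔ)
  -- infDist upper bound
  have hinf_le : infDist α (frontier (OkounkovBody n
      ((AddSubsemigroup.closure (S : Set (Fin (n+1) → ℕ)) :
        AddSubsemigroup (Fin (n+1) → ℕ)) : Set (Fin (n+1) → ℕ)))) ≤ 2*ρ + 1 := by
    rcases (frontier (OkounkovBody n
      ((AddSubsemigroup.closure (S : Set (Fin (n+1) → ℕ)) :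
        AddSubsemigroup (Fin (n+1) → ℕ)) : Set (Fin (n+1) → ℕ)))).eq_empty_or_nonempty with
      he | ⟨x, hx⟩
    · rw [he, infDist_empty]; linarith
    · have hxc : x ∈ closedBall (0 : EuclideanSpace ℝ (Fin n)) ρ :=
        closure_minimal hρsub isClosed_closedBall (frontier_subset_closure hx)
      have hxn : ‖x‖ ≤ ρ := mem_closedBall_zero_iff.mp hxc
      calc infDist α _ ≤ dist α x := infDist_le_dist_of_mem hx
        _ ≤ ‖α‖ + ‖x‖ := by rw [dist_eq_norm]; exact norm_sub_le _ _
        _ ≤ 2*ρ + 1 := by linarith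
  have hC1 : (2*r+2)*(2*ρ+2) + 1 ≤ C := by
    have := le_max_right (2*r*(1+ρ)) ((2*r+2)*(2*ρ+2)); linarith
  have hC2 : 2*r*(1+ρ) + 1 ≤ C := by
    have := le_max_left (2*r*(1+ρ)) ((2*r+2)*(2*ρ+2)); linarith
  have hklarge : 2*r + 2 < (k:ℝ) := by
    have h1 : C / k < 2*ρ + 1 := lt_of_lt_of_le hdist hinf_le
    rw [div_lt_iff₀ kpos] at h1
    nlinarith
  have hball : ∀ β : EuclideanSpace ℝ (Fin n), ‖β - α‖ ≤ (r*(1+ρ))/((k:ℝ) - r) →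
      β ∈ OkounkovBody n ((AddSubsemigroup.closure (S : Set (Fin (n+1) → ℕ)) :
        AddSubsemigroup (Fin (n+1) → ℕ)) : Set (Fin (n+1) → ℕ)) := by
    intro β hβ
    apply OkAux_ball_subset hαΔ
    rw [dist_eq_norm]
    refine lt_of_le_of_lt (le_trans hβ ?_) hdist
    rw [div_le_div_iff₀ (by linarith : (0:ℝ) < (k:ℝ) - r) kpos]
    have hC0 : 0 ≤ C := by nlinarith
    have e1 : 2*r*(1+ρ) * ((k:ℝ)/2) ≤ C * ((k:ℝ) - r) := by
      apply mul_le_mul (by linarith) (by linarith) (by linarith) hC0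
    nlinarith [e1]
  have hdeep : embSnoc n ((k:ℝ) • α) (k:ℝ) + -(toR n Q) ∈ closedConvexCone n (toR n ''
      ((AddSubsemigroup.closure (S : Set (Fin (n+1) → ℕ)) :
        AddSubsemigroup (Fin (n+1) → ℕ)) : Set (Fin (n+1) → ℕ))) := by
    apply OkAux_deep_mem n _ ρ r k hr1 (le_of_lt hρ0) (le_of_lt hklarge) α hball hα_norm
    rw [norm_neg, hrdef]
    linarith
  -- construct the lattice point z
  choose m hm using hrat
  have hα_nonneg : ∀ i, 0 ≤ α i := by
    intro i
    have h0 := OkAux_ccc_orthant n _ hsig (Fin.castSucc i)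
    simpa [embSnoc, Fin.snoc_castSucc] using h0
  have hm_nonneg : ∀ i, 0 ≤ m i := by
    intro i
    have h1 := hα_nonneg i
    rw [hm i] at h1
    have h2 : (0:ℝ) ≤ (m i : ℝ) := by
      have := mul_le_mul_of_nonneg_right h1 (le_of_lt kpos)
      rw [zero_mul, div_mul_cancel₀] at this
      · exact this
      · exact ne_of_gt kpos
    exact_mod_cast h2
  set z : Fin (n+1) → ℕ := Fin.snoc (fun i => (m i).toNat) k with hzdef
  have hz : toR n z = embSnoc n ((k:ℝ) • α) (k:ℝ) := by
    ext j
    refine Fin.lastCases ?_ ?_ j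
    · simp [toR, hzdef, embSnoc, Fin.snoc_last]
    · intro i
      simp only [toR, hzdef, embSnoc, PiLp.toLp_apply, Fin.snoc_castSucc, PiLp.smul_apply, smul_eq_mul]
      have htn : (((m i).toNat : ℕ) : ℝ) = ((m i : ℤ) : ℝ) := by
        exact_mod_cast congrArg (fun x : ℤ => (x : ℝ)) (Int.toNat_of_nonneg (hm_nonneg i))
      rw [htn, hm i]
      field_simp
  have hz' : toR n z - toR n Q ∈ closure (OkAux_fgcone n S) := by
    apply OkAux_ccc_subset_closure_fgcone n S
    rw [hz, sub_eq_add_neg]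
    exact hdeep
  obtain ⟨y, hyfg, hydist⟩ := Metric.mem_closure_iff.mp hz' 1 one_pos
  obtain ⟨c, hc, rfl⟩ := hyfg
  set z₀ : Fin (n+1) → ℕ := fun i => ∑ s ∈ S, ⌊c s⌋₊ * s i with hz₀def
  have hz₀M : z₀ ∈ M := by
    have hzz : z₀ = ∑ s ∈ S, ⌊c s⌋₊ • s := by
      funext i
      rw [hz₀def]
      simp only [Finset.sum_apply, Pi.smul_apply, smul_eq_mul]
    rw [hzz]
    exact sum_mem fun s hs => nsmul_mem (AddSubmonoid.subset_closure hs) _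
  have htoRz₀ : toR n z₀ = ∑ s ∈ S, (⌊c s⌋₊ : ℝ) • toR n s := by
    classical
    ext i
    rw [OkAux_sum_apply]
    simp only [toR, hz₀def, PiLp.toLp_apply, PiLp.smul_apply, smul_eq_mul]
    push_cast
    rfl
  have hfrac : ‖(∑ s ∈ S, c s • toR n s) - toR n z₀‖ ≤ R := by
    rw [htoRz₀, ← Finset.sum_sub_distrib]
    have hcong : ∀ s ∈ S, c s • toR n s - (⌊c s⌋₊:ℝ) • toR n s
        = (c s - ⌊c s⌋₊) • toR n s := fun s _ => (sub_smul _ _ _).symm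
    rw [Finset.sum_congr rfl hcong, hRdef]
    refine le_trans (norm_sum_le _ _) (Finset.sum_le_sum fun s _ => ?_)
    rw [norm_smul, Real.norm_eq_abs]
    have hf1 : (⌊c s⌋₊ : ℝ) ≤ c s := Nat.floor_le (hc s)
    have hf2 : c s < ⌊c s⌋₊ + 1 := Nat.lt_floor_add_one _
    have : |c s - ⌊c s⌋₊| ≤ 1 := by rw [abs_le]; constructor <;> linarith
    nlinarith [norm_nonneg (toR n s)]
  have hdist2 : ‖toR n z - toR n Q - toR n z₀‖ < 1 + R := by
    have h1 : dist (toR n z - toR n Q) (∑ s ∈ S, c s • toR n s) < 1 := hydist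
    calc ‖toR n z - toR n Q - toR n z₀‖
        ≤ dist (toR n z - toR n Q) (∑ s ∈ S, c s • toR n s)
          + ‖(∑ s ∈ S, c s • toR n s) - toR n z₀‖ := by
          rw [dist_eq_norm, ← dist_eq_norm, ← dist_eq_norm]
          exact dist_triangle _ _ _
      _ < 1 + R := by linarith
  set w : Fin (n+1) → ℤ := fun i => (z i : ℤ) - (Q i : ℤ) - (z₀ i : ℤ) with hwdef
  have hwW : w ∈ W := by
    rw [hW, Fintype.mem_piFinset]
    intro i
    rw [Finset.mem_Icc]
    have h2 : ((w i : ℤ) : ℝ) = (toR n z - toR n Q - toR n z₀) i := by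
      simp [hwdef, toR]
    have h1 : |((w i : ℤ) : ℝ)| < 1 + R := by
      rw [h2]
      exact lt_of_le_of_lt (OkAux_coord_le _ i) hdist2
    have hBR : 1 + R ≤ (B:ℝ) := by
      rw [hB]; push_cast
      have := Int.le_ceil R; linarith
    have h3 : |((w i : ℤ) : ℝ)| < (B:ℝ) := lt_of_lt_of_le h1 hBR
    rw [← Int.cast_abs] at h3
    have h4 : |w i| < B := by exact_mod_cast h3
    have h5 := abs_le.mp (le_of_lt h4)
    exact ⟨h5.1, h5.2⟩
  set Q' : Fin (n+1) → ℕ := ∑ w' ∈ W.erase w, Qf w' with hQ'def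
  have hQ'M : Q' ∈ M := sum_mem fun w' _ => hQf w'
  have hsplit : Q = Qf w + Q' := by
    rw [hQdef, hQ'def, Finset.add_sum_erase _ _ hwW]
  have hfinal : z = z₀ + Q' + P w := by
    funext i
    have h1 := hPQ w i
    have h2 : Q i = Qf w i + Q' i := by rw [hsplit]; rfl
    have h3 : (z i : ℤ) - (Q i : ℤ) - (z₀ i : ℤ) = w i := by simp [hwdef]
    have h4 : (z₀ + Q' + P w) i = z₀ i + Q' i + P w i := rfl
    rw [h4]
    omega
  have hzM : z ∈ M := by
    rw [hfinal]
    exact add_mem (add_mem hz₀M hQ'M) (hP w)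
  have hzne : z ≠ 0 := by
    intro h0
    have h1 : z (Fin.last n) = 0 := by rw [h0]; rfl
    rw [hzdef] at h1
    simp only [Fin.snoc_last] at h1
    omega
  exact ⟨z, OkAux_mono_sg hzM hzne, hz⟩
end

section
/- (Zaharjuta) Let F : ℕ^{n+1} → ℝ be subadditive and suppose there is a linear function λ : ℝ^{n+1} → ℝ with F(α) ≥ λ(α) for all α ∈ ℕ^{n+1}. Then there exists a function c[F] : Σ^0 → ℝ such that: (i) for every θ ∈ Σ^0 and every sequence α(k) ∈ ℕ^{n+1} with |α(k)| → ∞ and α(k)/|α(k)| → θ, one has F(α(k))/|α(k)| → c[F](θ); and (ii) c[F] is convex on Σ^0. -/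
open Set Filter

def Sigma0 (n : ℕ) : Set (EuclideanSpace ℝ (Fin (n + 1))) :=
  {x | (∑ i, x i) = 1 ∧ ∀ i, 0 < x i}

namespace Zah

variable {n : ℕ}

/-- Real sum of coordinates. -/
noncomputable def sR (γ : Fin (n + 1) → ℕ) : ℝ := ∑ i, (γ i : ℝ)

lemma sR_nonneg (γ : Fin (n + 1) → ℕ) : 0 ≤ sR γ :=
  Finset.sum_nonneg fun i _ => Nat.cast_nonneg _

lemma sR_add (γ δ : Fin (n + 1) → ℕ) : sR (γ + δ) = sR γ + sR δ := by
  simp [sR, Finset.sum_add_distrib]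

lemma sR_smul (m : ℕ) (γ : Fin (n + 1) → ℕ) : sR (m • γ) = m * sR γ := by
  simp [sR, Finset.mul_sum]

variable (G : (Fin (n + 1) → ℕ) → ℝ)

/-- An upper bound constant. -/
noncomputable def MC : ℝ := ∑ i : Fin (n + 1), G (Pi.single i 1)

lemma MC_nonneg (hpos : ∀ γ, 0 ≤ G γ) : 0 ≤ MC G :=
  Finset.sum_nonneg fun i _ => hpos _

lemma single_le_MC (hpos : ∀ γ, 0 ≤ G γ) (i : Fin (n + 1)) : G (Pi.single i 1) ≤ MC G :=
  Finset.single_le_sum (f := fun j => G (Pi.single j 1)) (fun j _ => hpos _) (Finset.mem_univ i)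

lemma growth (hsub : ∀ a b, G (a + b) ≤ G a + G b) (hpos : ∀ γ, 0 ≤ G γ) :
    ∀ γ, G γ ≤ MC G * sR γ + G 0 := by
  suffices h : ∀ N : ℕ, ∀ γ : Fin (n + 1) → ℕ, (∑ i, γ i) = N → G γ ≤ MC G * sR γ + G 0 by
    intro γ; exact h _ γ rfl
  intro N
  induction N with
  | zero =>
    intro γ hγ
    have h0 : γ = 0 := by
      funext i
      have := Finset.sum_eq_zero_iff.mp hγ i (Finset.mem_univ i)
      simpa using this
    subst h0
    have : sR (0 : Fin (n + 1) → ℕ) = 0 := by simp [sR]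
    rw [this]; ring_nf; simp
  | succ N ih =>
    intro γ hγ
    have hex : ∃ i, 0 < γ i := by
      by_contra hc
      push_neg at hc
      have : (∑ i, γ i) = 0 := Finset.sum_eq_zero fun i _ => Nat.le_zero.mp (hc i)
      omega
    obtain ⟨i, hi⟩ := hex
    set γ' := Function.update γ i (γ i - 1) with hγ'
    have hdec : γ = γ' + Pi.single i 1 := by
      funext j
      by_cases hj : j = i
      · subst hj; simp [γ', Function.update_self]; omega
      · simp [γ', Function.update_of_ne hj, Pi.single_eq_of_ne hj]
    have hsum' : (∑ j, γ' j) = N := by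
      have : (∑ j, γ j) = (∑ j, γ' j) + (∑ j, (Pi.single i 1 : Fin (n+1) → ℕ) j) := by
        rw [hdec]; simp [Finset.sum_add_distrib]
      have hs : (∑ j, (Pi.single i 1 : Fin (n+1) → ℕ) j) = 1 := by
        simp [Finset.sum_pi_single]
      omega
    have hsr : sR γ = sR γ' + 1 := by
      rw [hdec, sR_add]
      have : sR (Pi.single i 1 : Fin (n+1) → ℕ) = 1 := by
        simp [sR, Pi.single_apply, Finset.sum_ite_eq']
      rw [this]
    calc G γ = G (γ' + Pi.single i 1) := by rw [← hdec]
      _ ≤ G γ' + G (Pi.single i 1) := hsub _ _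
      _ ≤ (MC G * sR γ' + G 0) + MC G := by
          have := ih γ' hsum'
          have := single_le_MC G hpos i
          linarith
      _ = MC G * sR γ + G 0 := by rw [hsr]; ring

lemma G_smul (hsub : ∀ a b, G (a + b) ≤ G a + G b) (γ : Fin (n + 1) → ℕ) :
    ∀ m : ℕ, 1 ≤ m → G (m • γ) ≤ m * G γ := by
  intro m hm
  induction m with
  | zero => omega
  | succ m ih =>
    rcases Nat.eq_or_lt_of_le hm with h1 | h1
    · simp [← h1]
    · have hm' : 1 ≤ m := by omega
      have : (m + 1) • γ = m • γ + γ := by rw [add_smul, one_smul]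
      rw [this]
      calc G (m • γ + γ) ≤ G (m • γ) + G γ := hsub _ _
        _ ≤ m * G γ + G γ := by linarith [ih hm']
        _ = (↑(m + 1) : ℝ) * G γ := by push_cast; ring


/-- Admissible sequence for direction `θ` (coordinatewise form). -/
def Adm (θ : EuclideanSpace ℝ (Fin (n + 1))) (α : ℕ → (Fin (n + 1) → ℕ)) : Prop :=
  Tendsto (fun k => sR (α k)) atTop atTop ∧
  ∀ i, Tendsto (fun k => (α k i : ℝ) / sR (α k)) atTop (nhds (θ i))

lemma adm_of_bounds {θ : EuclideanSpace ℝ (Fin (n + 1))} (hθ : θ ∈ Sigma0 n)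
    (s : ℕ → Fin (n + 1) → ℕ) (r : ℕ → ℝ) (hr : Tendsto r atTop atTop)
    (C : ℝ) (hC : 0 ≤ C)
    (h1 : ∀ k i, r k * θ i ≤ s k i) (h2 : ∀ k i, (s k i : ℝ) ≤ r k * θ i + C) :
    Adm θ s ∧ (∀ k, r k ≤ sR (s k)) ∧ (∀ k, sR (s k) ≤ r k + (n + 1) * C) := by
  obtain ⟨hθ1, hθpos⟩ := hθ
  have hlo : ∀ k, r k ≤ sR (s k) := by
    intro k
    calc r k = ∑ i, r k * θ i := by rw [← Finset.mul_sum, hθ1, mul_one]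
      _ ≤ ∑ i, (s k i : ℝ) := Finset.sum_le_sum fun i _ => h1 k i
  have hhi : ∀ k, sR (s k) ≤ r k + (n + 1) * C := by
    intro k
    calc sR (s k) ≤ ∑ i : Fin (n+1), (r k * θ i + C) :=
          Finset.sum_le_sum fun i _ => h2 k i
      _ = r k + (n + 1) * C := by
          rw [Finset.sum_add_distrib, ← Finset.mul_sum, hθ1, mul_one,
            Finset.sum_const, Finset.card_univ, Fintype.card_fin, nsmul_eq_mul]
          push_cast; ring
  have hsum : Tendsto (fun k => sR (s k)) atTop atTop :=
    tendsto_atTop_mono hlo hr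
  set D : ℝ := (n + 1) * C with hD
  have hD0 : 0 ≤ D := by positivity
  have hrpos : ∀ᶠ k in atTop, 0 < r k := hr.eventually_gt_atTop 0
  refine ⟨⟨hsum, fun i => ?_⟩, hlo, hhi⟩
  -- squeeze
  have hlolim : Tendsto (fun k => r k * θ i / (r k + D)) atTop (nhds (θ i)) := by
    have hinv : Tendsto (fun k => (r k + D)⁻¹) atTop (nhds 0) :=
      (tendsto_atTop_add_const_right atTop D hr).inv_tendsto_atTop
    have hmain : Tendsto (fun k => θ i * (1 - D * (r k + D)⁻¹)) atTop
        (nhds (θ i * (1 - D * 0))) :=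
      tendsto_const_nhds.mul (tendsto_const_nhds.sub (tendsto_const_nhds.mul hinv))
    have : Tendsto (fun k => θ i * (1 - D * (r k + D)⁻¹)) atTop (nhds (θ i)) := by
      simpa using hmain
    refine this.congr' ?_
    filter_upwards [hrpos] with k hk
    have hne : r k + D ≠ 0 := by positivity
    field_simp
    ring
  have hhilim : Tendsto (fun k => (r k * θ i + C) / r k) atTop (nhds (θ i)) := by
    have hinv : Tendsto (fun k => (r k)⁻¹) atTop (nhds 0) := hr.inv_tendsto_atTop
    have hmain : Tendsto (fun k => θ i + C * (r k)⁻¹) atTop (nhds (θ i + C * 0)) :=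
      tendsto_const_nhds.add (tendsto_const_nhds.mul hinv)
    have : Tendsto (fun k => θ i + C * (r k)⁻¹) atTop (nhds (θ i)) := by simpa using hmain
    refine this.congr' ?_
    filter_upwards [hrpos] with k hk
    have hne : r k ≠ 0 := ne_of_gt hk
    field_simp
  refine tendsto_of_tendsto_of_tendsto_of_le_of_le' hlolim hhilim ?_ ?_
  · filter_upwards [hrpos] with k hk
    have hS : 0 < sR (s k) := lt_of_lt_of_le hk (hlo k)
    have h1' : r k * θ i ≤ (s k i : ℝ) := h1 k i
    have h2' : sR (s k) ≤ r k + D := hhi k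
    exact div_le_div₀ (Nat.cast_nonneg _) h1' hS h2'
  · filter_upwards [hrpos] with k hk
    have hS : 0 < sR (s k) := lt_of_lt_of_le hk (hlo k)
    have hnum : 0 ≤ r k * θ i + C := by
      have := (hθpos i).le
      positivity
    exact div_le_div₀ hnum (h2 k i) hk (hlo k)


lemma adm_bounds (hsub : ∀ a b, G (a + b) ≤ G a + G b) (hpos : ∀ γ, 0 ≤ G γ)
    {θ : EuclideanSpace ℝ (Fin (n + 1))} {α : ℕ → Fin (n + 1) → ℕ} (hα : Adm θ α) :
    ∀ᶠ k in atTop, 0 ≤ G (α k) / sR (α k) ∧ G (α k) / sR (α k) ≤ MC G + G 0 := by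
  filter_upwards [hα.1.eventually_ge_atTop 1] with k hk
  have hS : (0:ℝ) < sR (α k) := lt_of_lt_of_le one_pos hk
  constructor
  · exact div_nonneg (hpos _) hS.le
  · rw [div_le_iff₀ hS]
    have h1 := growth G hsub hpos (α k)
    have h2 : G 0 ≤ G 0 * sR (α k) := le_mul_of_one_le_right (hpos 0) hk
    have h3 : MC G * sR (α k) ≤ MC G * sR (α k) := le_refl _
    nlinarith [MC_nonneg G hpos, hpos 0]

set_option maxHeartbeats 2000000 in
lemma key_step (hsub : ∀ a b, G (a + b) ≤ G a + G b) (hpos : ∀ γ, 0 ≤ G γ)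
    {θ : EuclideanSpace ℝ (Fin (n + 1))} (hθpos : ∀ i, 0 < θ i)
    {tm δ δ' ε ε₁ L : ℝ}
    (htm : 0 < tm) (htm_le : ∀ i, tm ≤ θ i)
    (hε : 0 < ε)
    (hδ : 0 < δ) (hδ2 : δ ≤ 1 / 2) (hδM : 2 * MC G * δ ≤ ε / 2)
    (hδ'_def : δ' = δ * tm / 2)
    (hε₁_def : ε₁ = ε / 4)
    (hL0 : 0 ≤ L)
    (B A : Fin (n + 1) → ℕ)
    (hb1 : 1 ≤ sR B)
    (hGB : G B ≤ (L + ε₁) * sR B)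
    (hj3 : ∀ i, |(B i : ℝ) / sR B - θ i| < δ')
    (hk1 : ∀ i, |(A i : ℝ) / sR A - θ i| < δ')
    (hk2 : sR B / δ ≤ sR A) (hk3 : 1 ≤ sR A) (hk4 : 2 * sR B ≤ sR A)
    (hk5 : (G 0 + 1) / ε₁ ≤ sR A) :
    G A / sR A ≤ L + ε := by
  have hε₁ : 0 < ε₁ := by rw [hε₁_def]; positivity
  set M : ℝ := MC G with hM_def
  have hM0 : 0 ≤ M := MC_nonneg G hpos
  set S : ℝ := sR A with hS_def
  set b : ℝ := sR B with hb_def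
  have hbpos : (0:ℝ) < b := lt_of_lt_of_le one_pos hb1
  have hSpos : (0:ℝ) < S := lt_of_lt_of_le one_pos hk3
  have hbS : b ≤ δ * S := by
    rw [div_le_iff₀ hδ] at hk2
    linarith
  have hG0S : G 0 ≤ ε₁ * S := by
    rw [div_le_iff₀ hε₁] at hk5
    nlinarith [hpos 0]
  set q : ℕ := ⌊(1 - δ) * S / b⌋₊ with hq_def
  have hq1 : 1 ≤ q := by
    apply Nat.le_floor
    push_cast
    rw [le_div_iff₀ hbpos]
    nlinarith [mul_le_mul_of_nonneg_right hδ2 hSpos.le]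
  have hq1R : (1:ℝ) ≤ (q:ℝ) := by exact_mod_cast hq1
  have hdm : (1 - δ) * S / b * b = (1 - δ) * S := div_mul_cancel₀ _ hbpos.ne'
  have hfl_nonneg : (0:ℝ) ≤ (1 - δ) * S / b :=
    div_nonneg (mul_nonneg (by linarith) hSpos.le) hbpos.le
  have hqup : (q : ℝ) * b ≤ (1 - δ) * S := by
    have h := Nat.floor_le hfl_nonneg
    calc (q : ℝ) * b ≤ (1 - δ) * S / b * b := mul_le_mul_of_nonneg_right h hbpos.le
      _ = (1 - δ) * S := hdm
  have hqlow : (1 - δ) * S - b ≤ (q : ℝ) * b := by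
    have h : (1 - δ) * S / b - 1 ≤ (q : ℝ) := (Nat.sub_one_lt_floor ((1 - δ) * S / b)).le
    have h2 := mul_le_mul_of_nonneg_right h hbpos.le
    rw [sub_mul, one_mul, hdm] at h2
    linarith
  clear_value q
  -- componentwise inequality
  have hcomp : ∀ i, q * B i ≤ A i := by
    intro i
    have hj3' := abs_lt.mp (hj3 i)
    have hk1' := abs_lt.mp (hk1 i)
    have hBi' : (B i : ℝ) ≤ (θ i + δ') * b := by
      have : (B i : ℝ) / b ≤ θ i + δ' := by linarith [hj3'.2]
      rw [div_le_iff₀ hbpos] at this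
      linarith
    have hαi' : (θ i - δ') * S ≤ (A i : ℝ) := by
      have : θ i - δ' ≤ (A i : ℝ) / S := by linarith [hk1'.1]
      rw [le_div_iff₀ hSpos] at this
      linarith
    have hmid : (1 - δ) * (θ i + δ') ≤ θ i - δ' := by
      have h1 : tm ≤ θ i := htm_le i
      have h2 : δ * tm ≤ δ * θ i := mul_le_mul_of_nonneg_left h1 hδ.le
      have h3 : 0 ≤ δ * δ' := by
        apply mul_nonneg hδ.le
        rw [hδ'_def]
        positivity
      nlinarith
    have hδ'pos : 0 < δ' := by
      rw [hδ'_def]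
      positivity
    have hcast : (q : ℝ) * (B i : ℝ) ≤ (A i : ℝ) := by
      calc (q : ℝ) * (B i : ℝ) ≤ (q : ℝ) * ((θ i + δ') * b) :=
            mul_le_mul_of_nonneg_left hBi' (by positivity)
        _ = ((q:ℝ) * b) * (θ i + δ') := by ring
        _ ≤ ((1 - δ) * S) * (θ i + δ') := by
            apply mul_le_mul_of_nonneg_right hqup
            nlinarith [hθpos i]
        _ = ((1 - δ) * (θ i + δ')) * S := by ring
        _ ≤ (θ i - δ') * S := mul_le_mul_of_nonneg_right hmid hSpos.le
        _ ≤ (A i : ℝ) := hαi'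
    exact_mod_cast hcast
  -- decomposition
  set R : Fin (n + 1) → ℕ := fun i => A i - q * B i with hR_def
  have hdec : A = q • B + R := by
    funext i
    have := hcomp i
    simp only [Pi.add_apply, Pi.smul_apply, smul_eq_mul, hR_def]
    omega
  have hsRR : sR R = S - (q : ℝ) * b := by
    rw [hS_def, hb_def]
    simp only [sR, hR_def]
    rw [Finset.mul_sum, ← Finset.sum_sub_distrib]
    apply Finset.sum_congr rfl
    intro i _
    rw [Nat.cast_sub (hcomp i)]
    push_cast
    ring
  have hGsplit : G A ≤ (q : ℝ) * G B + G R := by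
    calc G A = G (q • B + R) := by rw [← hdec]
      _ ≤ G (q • B) + G R := hsub _ _
      _ ≤ (q : ℝ) * G B + G R := by
          have := G_smul G hsub B q hq1
          linarith
  have hGR : G R ≤ M * (S - (q : ℝ) * b) + G 0 := by
    have := growth G hsub hpos R
    rw [hsRR] at this
    exact this
  have hX : G A ≤ (q : ℝ) * G B + M * (S - (q : ℝ) * b) + G 0 := by linarith
  clear_value R
  have hfin : (q : ℝ) * G B + M * (S - (q : ℝ) * b) + G 0 ≤ (L + ε) * S := by
    have h1 : (q : ℝ) * G B ≤ ((q:ℝ) * b) * (L + ε₁) := by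
      calc (q : ℝ) * G B ≤ (q : ℝ) * ((L + ε₁) * b) :=
            mul_le_mul_of_nonneg_left hGB (by positivity)
        _ = ((q:ℝ) * b) * (L + ε₁) := by ring
    have h2 : ((q:ℝ) * b) * (L + ε₁) ≤ ((1 - δ) * S) * (L + ε₁) :=
      mul_le_mul_of_nonneg_right hqup (by linarith)
    have h3 : M * (S - (q : ℝ) * b) ≤ M * (2 * δ * S) := by
      apply mul_le_mul_of_nonneg_left _ hM0
      linarith
    have h5 : M * (2 * δ * S) ≤ (ε / 2) * S := by
      have he : M * (2 * δ * S) = (2 * M * δ) * S := by ring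
      rw [he]
      exact mul_le_mul_of_nonneg_right hδM hSpos.le
    have h6 : ((1 - δ) * S) * (L + ε₁) ≤ S * (L + ε₁) := by
      apply mul_le_mul_of_nonneg_right _ (by linarith : (0:ℝ) ≤ L + ε₁)
      nlinarith [mul_nonneg hδ.le hSpos.le]
    have h8 : S * (L + ε₁) + (ε / 2) * S + ε₁ * S = (L + ε) * S := by
      rw [hε₁_def]; ring
    linarith
  rw [div_le_iff₀ hSpos]
  linarith

set_option maxHeartbeats 2000000 in
lemma key (hsub : ∀ a b, G (a + b) ≤ G a + G b) (hpos : ∀ γ, 0 ≤ G γ)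
    {θ : EuclideanSpace ℝ (Fin (n + 1))} (hθ : θ ∈ Sigma0 n)
    {α β : ℕ → Fin (n + 1) → ℕ} (hα : Adm θ α) (hβ : Adm θ β) :
    limsup (fun k => G (α k) / sR (α k)) atTop ≤
      liminf (fun j => G (β j) / sR (β j)) atTop := by
  set u : ℕ → ℝ := fun k => G (α k) / sR (α k) with hu_def
  set v : ℕ → ℝ := fun j => G (β j) / sR (β j) with hv_def
  have hubnd := adm_bounds G hsub hpos hα
  have hvbnd := adm_bounds G hsub hpos hβ
  have hubdd_ge : IsBoundedUnder (· ≥ ·) atTop u :=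
    isBoundedUnder_of_eventually_ge (hubnd.mono fun k h => h.1)
  have hvbdd_le : IsBoundedUnder (· ≤ ·) atTop v :=
    isBoundedUnder_of_eventually_le (hvbnd.mono fun j h => h.2)
  set L : ℝ := liminf v atTop with hL_def
  have hL0 : 0 ≤ L :=
    le_liminf_of_le hvbdd_le.isCoboundedUnder_ge (hvbnd.mono fun j h => h.1)
  obtain ⟨hθ1, hθpos⟩ := hθ
  set tm : ℝ := Finset.univ.inf' Finset.univ_nonempty (fun i => θ i) with htm_def
  have htm : 0 < tm := by
    rw [htm_def, Finset.lt_inf'_iff]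
    exact fun i _ => hθpos i
  have htm_le : ∀ i, tm ≤ θ i := fun i => Finset.inf'_le _ (Finset.mem_univ i)
  clear_value tm
  have main : ∀ ε : ℝ, 0 < ε → limsup u atTop ≤ L + ε := by
    intro ε hε
    set M : ℝ := MC G with hM_def
    have hM0 : 0 ≤ M := MC_nonneg G hpos
    set ε₁ : ℝ := ε / 4 with hε₁_def
    have hε₁ : 0 < ε₁ := by positivity
    set δ : ℝ := min (ε / (4 * (M + 1))) (1 / 2) with hδ_def
    have hδ : 0 < δ := lt_min (by positivity) one_half_pos
    have hδ2 : δ ≤ 1 / 2 := min_le_right _ _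
    have hδM : 2 * M * δ ≤ ε / 2 := by
      have h1 : δ ≤ ε / (4 * (M + 1)) := min_le_left _ _
      have h2 : 0 < 4 * (M + 1) := by positivity
      rw [le_div_iff₀ h2] at h1
      nlinarith
    set δ' : ℝ := δ * tm / 2 with hδ'_def
    have hδ' : 0 < δ' := by positivity
    clear_value δ δ' ε₁
    have hfreq : ∃ᶠ j in atTop, v j < L + ε₁ :=
      frequently_lt_of_liminf_lt hvbdd_le.isCoboundedUnder_ge
        (by linarith : L < L + ε₁)
    have hβdir : ∀ᶠ j in atTop, ∀ i, |(β j i : ℝ) / sR (β j) - θ i| < δ' := by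
      rw [eventually_all]
      intro i
      have := Metric.tendsto_nhds.mp (hβ.2 i) δ' hδ'
      simpa [Real.dist_eq] using this
    obtain ⟨j, hj1, hj2, hj3⟩ :=
      (hfreq.and_eventually ((hβ.1.eventually_ge_atTop 1).and hβdir)).exists
    have hGB : G (β j) ≤ (L + ε₁) * sR (β j) := by
      have hbpos : (0:ℝ) < sR (β j) := lt_of_lt_of_le one_pos hj2
      have : G (β j) / sR (β j) < L + ε₁ := hj1
      rw [div_lt_iff₀ hbpos] at this
      linarith
    have hαdir : ∀ᶠ k in atTop, ∀ i, |(α k i : ℝ) / sR (α k) - θ i| < δ' := by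
      rw [eventually_all]
      intro i
      have := Metric.tendsto_nhds.mp (hα.2 i) δ' hδ'
      simpa [Real.dist_eq] using this
    have hev : ∀ᶠ k in atTop, u k ≤ L + ε := by
      filter_upwards [hαdir, hα.1.eventually_ge_atTop (sR (β j) / δ),
        hα.1.eventually_ge_atTop 1, hα.1.eventually_ge_atTop (2 * sR (β j)),
        hα.1.eventually_ge_atTop ((G 0 + 1) / ε₁)] with k hk1 hk2 hk3 hk4 hk5
      exact key_step G hsub hpos hθpos htm htm_le hε hδ hδ2 (by rw [← hM_def]; exact hδM)
        hδ'_def hε₁_def hL0 (β j) (α k) hj2 hGB hj3 hk1 hk2 hk3 hk4 hk5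
    exact limsup_le_of_le hubdd_ge.isCoboundedUnder_le hev
  by_contra hc
  push_neg at hc
  have h2 : 0 < (limsup u atTop - L) / 2 := by linarith
  have := main _ h2
  linarith

/-- canonical sequence approximating direction θ. -/
noncomputable def cs (θ : EuclideanSpace ℝ (Fin (n + 1))) (k : ℕ) : Fin (n + 1) → ℕ :=
  fun i => ⌈(k : ℝ) * θ i⌉₊

lemma adm_cs {θ : EuclideanSpace ℝ (Fin (n + 1))} (hθ : θ ∈ Sigma0 n) : Adm θ (cs θ) := by
  refine (adm_of_bounds hθ (cs θ) (fun k => (k : ℝ)) tendsto_natCast_atTop_atTop 1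
    zero_le_one ?_ ?_).1
  · intro k i
    exact Nat.le_ceil _
  · intro k i
    have h0 : (0:ℝ) ≤ (k : ℝ) * θ i := mul_nonneg (Nat.cast_nonneg _) (hθ.2 i).le
    exact (Nat.ceil_lt_add_one h0).le

/-- The candidate limit value. -/
noncomputable def cVal (θ : EuclideanSpace ℝ (Fin (n + 1))) : ℝ :=
  limsup (fun k => G (cs θ k) / sR (cs θ k)) atTop

lemma tendsto_cVal (hsub : ∀ a b, G (a + b) ≤ G a + G b) (hpos : ∀ γ, 0 ≤ G γ)
    {θ : EuclideanSpace ℝ (Fin (n + 1))} (hθ : θ ∈ Sigma0 n)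
    {α : ℕ → Fin (n + 1) → ℕ} (hα : Adm θ α) :
    Tendsto (fun k => G (α k) / sR (α k)) atTop (nhds (cVal G θ)) := by
  set u : ℕ → ℝ := fun k => G (α k) / sR (α k) with hu_def
  set w : ℕ → ℝ := fun k => G (cs θ k) / sR (cs θ k) with hw_def
  have hubnd := adm_bounds G hsub hpos hα
  have hwbnd := adm_bounds G hsub hpos (adm_cs hθ)
  have hubdd_le : IsBoundedUnder (· ≤ ·) atTop u :=
    isBoundedUnder_of_eventually_le (hubnd.mono fun k h => h.2)
  have hubdd_ge : IsBoundedUnder (· ≥ ·) atTop u :=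
    isBoundedUnder_of_eventually_ge (hubnd.mono fun k h => h.1)
  have hwbdd_le : IsBoundedUnder (· ≤ ·) atTop w :=
    isBoundedUnder_of_eventually_le (hwbnd.mono fun k h => h.2)
  have hwbdd_ge : IsBoundedUnder (· ≥ ·) atTop w :=
    isBoundedUnder_of_eventually_ge (hwbnd.mono fun k h => h.1)
  have h1 : limsup u atTop ≤ liminf w atTop := key G hsub hpos hθ hα (adm_cs hθ)
  have h2 : limsup w atTop ≤ liminf u atTop := key G hsub hpos hθ (adm_cs hθ) hα
  have h3 : liminf w atTop ≤ limsup w atTop := liminf_le_limsup hwbdd_le hwbdd_ge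
  have h4 : liminf u atTop ≤ limsup u atTop := liminf_le_limsup hubdd_le hubdd_ge
  have hclimsup : limsup u atTop = cVal G θ := by
    have : cVal G θ = limsup w atTop := rfl
    rw [this]
    linarith
  have hcliminf : liminf u atTop = cVal G θ := by
    have : cVal G θ = limsup w atTop := rfl
    rw [this]
    linarith
  exact tendsto_of_liminf_eq_limsup hcliminf hclimsup hubdd_le hubdd_ge

lemma convex_sigma0 : Convex ℝ (Sigma0 n) := by
  intro x hx y hy t u ht hu htu
  constructor
  · have : ∀ i, (t • x + u • y) i = t * x i + u * y i := by
      intro i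
      simp [PiLp.add_apply, PiLp.smul_apply, smul_eq_mul]
    calc (∑ i, (t • x + u • y) i) = ∑ i, (t * x i + u * y i) :=
          Finset.sum_congr rfl fun i _ => this i
      _ = t * (∑ i, x i) + u * (∑ i, y i) := by
          rw [Finset.sum_add_distrib, Finset.mul_sum, Finset.mul_sum]
      _ = 1 := by rw [hx.1, hy.1]; linarith
  · intro i
    have happ : (t • x + u • y) i = t * x i + u * y i := by
      simp [PiLp.add_apply, PiLp.smul_apply, smul_eq_mul]
    rw [happ]
    rcases eq_or_lt_of_le ht with h | h
    · have hu1 : u = 1 := by linarith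
      rw [← h, hu1]
      simpa using hy.2 i
    · have h1 : 0 < t * x i := mul_pos h (hx.2 i)
      have h2 : 0 ≤ u * y i := mul_nonneg hu (hy.2 i).le
      linarith

lemma ratio_tendsto {s : ℕ → Fin (n + 1) → ℕ} {c C : ℝ} (hC : 0 ≤ C)
    (hlo : ∀ k : ℕ, c * (k : ℝ) ≤ sR (s k)) (hhi : ∀ k : ℕ, sR (s k) ≤ c * (k : ℝ) + C) :
    Tendsto (fun k => sR (s k) / (k : ℝ)) atTop (nhds c) := by
  have hinv : Tendsto (fun k : ℕ => ((k:ℝ))⁻¹) atTop (nhds 0) :=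
    tendsto_inv_atTop_nhds_zero_nat
  have hlolim : Tendsto (fun k : ℕ => c - C * (k:ℝ)⁻¹) atTop (nhds c) := by
    have h : Tendsto (fun k : ℕ => c - C * (k:ℝ)⁻¹) atTop (nhds (c - C * 0)) :=
      tendsto_const_nhds.sub (tendsto_const_nhds.mul hinv)
    simpa using h
  have hhilim : Tendsto (fun k : ℕ => c + C * (k:ℝ)⁻¹) atTop (nhds c) := by
    have h : Tendsto (fun k : ℕ => c + C * (k:ℝ)⁻¹) atTop (nhds (c + C * 0)) :=
      tendsto_const_nhds.add (tendsto_const_nhds.mul hinv)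
    simpa using h
  refine tendsto_of_tendsto_of_tendsto_of_le_of_le' hlolim hhilim ?_ ?_
  · filter_upwards [eventually_gt_atTop 0] with k hk
    have hkpos : (0:ℝ) < (k:ℝ) := Nat.cast_pos.mpr hk
    have hki : (k:ℝ)⁻¹ * (k:ℝ) = 1 := inv_mul_cancel₀ hkpos.ne'
    rw [le_div_iff₀ hkpos]
    have h2 := hlo k
    have hexp : (c - C * (k:ℝ)⁻¹) * (k:ℝ) = c * (k:ℝ) - C * ((k:ℝ)⁻¹ * (k:ℝ)) := by ring
    rw [hexp, hki]
    linarith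
  · filter_upwards [eventually_gt_atTop 0] with k hk
    have hkpos : (0:ℝ) < (k:ℝ) := Nat.cast_pos.mpr hk
    have hki : (k:ℝ)⁻¹ * (k:ℝ) = 1 := inv_mul_cancel₀ hkpos.ne'
    rw [div_le_iff₀ hkpos]
    have h2 := hhi k
    have hexp : (c + C * (k:ℝ)⁻¹) * (k:ℝ) = c * (k:ℝ) + C * ((k:ℝ)⁻¹ * (k:ℝ)) := by ring
    rw [hexp, hki]
    linarith

set_option maxHeartbeats 2000000 in
lemma cVal_convex (hsub : ∀ a b, G (a + b) ≤ G a + G b) (hpos : ∀ γ, 0 ≤ G γ)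
    {x y : EuclideanSpace ℝ (Fin (n + 1))} (hx : x ∈ Sigma0 n) (hy : y ∈ Sigma0 n)
    {t u : ℝ} (ht : 0 ≤ t) (hu : 0 ≤ u) (htu : t + u = 1) :
    cVal G (t • x + u • y) ≤ t * cVal G x + u * cVal G y := by
  rcases eq_or_lt_of_le ht with h | htpos
  · have hu1 : u = 1 := by linarith
    rw [← h, hu1]
    simp
  rcases eq_or_lt_of_le hu with h | hupos
  · have ht1 : t = 1 := by linarith
    rw [← h, ht1]
    simp
  set θ : EuclideanSpace ℝ (Fin (n + 1)) := t • x + u • y with hθ_def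
  have hθ : θ ∈ Sigma0 n := convex_sigma0 hx hy ht hu htu
  have happ : ∀ i, θ i = t * x i + u * y i := by
    intro i
    simp [hθ_def, PiLp.add_apply, PiLp.smul_apply, smul_eq_mul]
  -- the three sequences
  set a : ℕ → Fin (n + 1) → ℕ := fun k i => ⌈t * (k : ℝ) * x i⌉₊ with ha_def
  set bb : ℕ → Fin (n + 1) → ℕ := fun k i => ⌈u * (k : ℝ) * y i⌉₊ with hb_def
  have hrt : Tendsto (fun k : ℕ => t * (k : ℝ)) atTop atTop :=
    tendsto_natCast_atTop_atTop.const_mul_atTop htpos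
  have hru : Tendsto (fun k : ℕ => u * (k : ℝ)) atTop atTop :=
    tendsto_natCast_atTop_atTop.const_mul_atTop hupos
  have hadm_a := adm_of_bounds hx a (fun k => t * (k : ℝ)) hrt 1 zero_le_one
    (fun k i => Nat.le_ceil _)
    (fun k i => (Nat.ceil_lt_add_one (mul_nonneg (mul_nonneg ht (Nat.cast_nonneg k)) (hx.2 i).le)).le)
  have hadm_b := adm_of_bounds hy bb (fun k => u * (k : ℝ)) hru 1 zero_le_one
    (fun k i => Nat.le_ceil _)
    (fun k i => (Nat.ceil_lt_add_one (mul_nonneg (mul_nonneg hu (Nat.cast_nonneg k)) (hy.2 i).le)).le)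
  have hadm_s := adm_of_bounds hθ (fun k => a k + bb k) (fun k => (k : ℝ))
    tendsto_natCast_atTop_atTop 2 (by norm_num)
    (by
      intro k i
      have h1 : t * (k:ℝ) * x i ≤ a k i := Nat.le_ceil _
      have h2 : u * (k:ℝ) * y i ≤ bb k i := Nat.le_ceil _
      have : ((a k + bb k) i : ℝ) = (a k i : ℝ) + (bb k i : ℝ) := by
        simp [Pi.add_apply]
      rw [this, happ i]
      push_cast
      nlinarith)
    (by
      intro k i
      have h1 : (a k i : ℝ) ≤ t * (k:ℝ) * x i + 1 :=
        (Nat.ceil_lt_add_one (mul_nonneg (mul_nonneg ht (Nat.cast_nonneg k)) (hx.2 i).le)).le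
      have h2 : (bb k i : ℝ) ≤ u * (k:ℝ) * y i + 1 :=
        (Nat.ceil_lt_add_one (mul_nonneg (mul_nonneg hu (Nat.cast_nonneg k)) (hy.2 i).le)).le
      have : ((a k + bb k) i : ℝ) = (a k i : ℝ) + (bb k i : ℝ) := by
        simp [Pi.add_apply]
      rw [this, happ i]
      push_cast
      nlinarith)
  -- limits
  have T0 : Tendsto (fun k => G (a k + bb k) / sR (a k + bb k)) atTop (nhds (cVal G θ)) :=
    tendsto_cVal G hsub hpos hθ hadm_s.1
  have T1 : Tendsto (fun k => G (a k) / sR (a k)) atTop (nhds (cVal G x)) :=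
    tendsto_cVal G hsub hpos hx hadm_a.1
  have T2 : Tendsto (fun k => G (bb k) / sR (bb k)) atTop (nhds (cVal G y)) :=
    tendsto_cVal G hsub hpos hy hadm_b.1
  -- ratios
  have hsum_a : Tendsto (fun k => sR (a k) / (k : ℝ)) atTop (nhds t) :=
    ratio_tendsto (by positivity) (fun k => hadm_a.2.1 k)
      (fun k => hadm_a.2.2 k)
  have hsum_b : Tendsto (fun k => sR (bb k) / (k : ℝ)) atTop (nhds u) :=
    ratio_tendsto (by positivity) (fun k => hadm_b.2.1 k)
      (fun k => hadm_b.2.2 k)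
  have hsum_s : Tendsto (fun k => sR (a k + bb k) / (k : ℝ)) atTop (nhds 1) :=
    ratio_tendsto (c := 1) (C := ((n:ℝ) + 1) * 2) (by positivity)
      (fun k => by simpa using hadm_s.2.1 k)
      (fun k => by simpa using hadm_s.2.2 k)
  have hra : Tendsto (fun k => sR (a k) / sR (a k + bb k)) atTop (nhds t) := by
    have h := hsum_a.div hsum_s one_ne_zero
    rw [div_one] at h
    refine h.congr' ?_
    filter_upwards [eventually_gt_atTop 0] with k hk
    exact div_div_div_cancel_right₀ (by exact_mod_cast hk.ne' : ((k:ℝ) ≠ 0)) _ _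
  have hrb : Tendsto (fun k => sR (bb k) / sR (a k + bb k)) atTop (nhds u) := by
    have h := hsum_b.div hsum_s one_ne_zero
    rw [div_one] at h
    refine h.congr' ?_
    filter_upwards [eventually_gt_atTop 0] with k hk
    exact div_div_div_cancel_right₀ (by exact_mod_cast hk.ne' : ((k:ℝ) ≠ 0)) _ _
  -- the inequality
  have hineq : ∀ᶠ k in atTop, G (a k + bb k) / sR (a k + bb k) ≤
      G (a k) / sR (a k) * (sR (a k) / sR (a k + bb k)) +
      G (bb k) / sR (bb k) * (sR (bb k) / sR (a k + bb k)) := by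
    filter_upwards [hadm_a.1.1.eventually_ge_atTop 1, hadm_b.1.1.eventually_ge_atTop 1,
      hadm_s.1.1.eventually_ge_atTop 1] with k hka hkb hks
    have hpa : (0:ℝ) < sR (a k) := lt_of_lt_of_le one_pos hka
    have hpb : (0:ℝ) < sR (bb k) := lt_of_lt_of_le one_pos hkb
    have hps : (0:ℝ) < sR (a k + bb k) := lt_of_lt_of_le one_pos hks
    have hsplit : G (a k + bb k) ≤ G (a k) + G (bb k) := hsub _ _
    have hda : G (a k) / sR (a k) * (sR (a k) / sR (a k + bb k)) =
        G (a k) / sR (a k + bb k) := by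
      field_simp
    have hdb : G (bb k) / sR (bb k) * (sR (bb k) / sR (a k + bb k)) =
        G (bb k) / sR (a k + bb k) := by
      field_simp
    rw [hda, hdb, ← add_div, div_le_div_iff₀ hps hps]
    nlinarith
  have hRHS : Tendsto (fun k => G (a k) / sR (a k) * (sR (a k) / sR (a k + bb k)) +
      G (bb k) / sR (bb k) * (sR (bb k) / sR (a k + bb k))) atTop
      (nhds (cVal G x * t + cVal G y * u)) :=
    (T1.mul hra).add (T2.mul hrb)
  have := le_of_tendsto_of_tendsto T0 hRHS hineq
  linarith

end Zah

/-- **Zaharjuta's theorem.** If `F : ℕ^{n+1} → ℝ` is subadditive and bounded below by a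
linear function, then for any sequence `α(k)` with `|α(k)| → ∞` and
`α(k)/|α(k)| → θ ∈ Σ^0`, the limit of `F(α(k))/|α(k)|` exists, depends only on `θ`, and
defines a convex function on `Σ^0`. -/
theorem zaharjuta (n : ℕ) (F : (Fin (n + 1) → ℕ) → ℝ)
    (hsub : ∀ α β : Fin (n + 1) → ℕ, F (α + β) ≤ F α + F β)
    (lam : EuclideanSpace ℝ (Fin (n + 1)) →ₗ[ℝ] ℝ)
    (hlow : ∀ α : Fin (n + 1) → ℕ, lam (toR n α) ≤ F α) :
    ∃ c : EuclideanSpace ℝ (Fin (n + 1)) → ℝ,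
      ConvexOn ℝ (Sigma0 n) c ∧
      ∀ θ ∈ Sigma0 n, ∀ α : ℕ → (Fin (n + 1) → ℕ),
        Tendsto (fun k => ∑ i, (α k i : ℝ)) atTop atTop →
        Tendsto (fun k => (∑ i, (α k i : ℝ))⁻¹ • toR n (α k)) atTop (nhds θ) →
        Tendsto (fun k => F (α k) / ∑ i, (α k i : ℝ)) atTop (nhds (c θ)) := by
  classical
  set G : (Fin (n + 1) → ℕ) → ℝ := fun γ => F γ - lam (toR n γ) with hG_def
  have htoR_add : ∀ a b : Fin (n + 1) → ℕ, toR n (a + b) = toR n a + toR n b := by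
    intro a b
    ext i
    show (((a + b) i : ℕ) : ℝ) = toR n a i + toR n b i
    simp [toR]
  have hsubG : ∀ a b, G (a + b) ≤ G a + G b := by
    intro a b
    simp only [hG_def]
    rw [htoR_add, map_add]
    have := hsub a b
    linarith
  have hposG : ∀ γ, 0 ≤ G γ := fun γ => sub_nonneg.mpr (hlow γ)
  have hlamc : Continuous lam := lam.continuous_of_finiteDimensional
  refine ⟨fun θ => Zah.cVal G θ + lam θ, ⟨Zah.convex_sigma0, ?_⟩, ?_⟩
  · intro x hx y hy t u ht hu htu
    have h1 := Zah.cVal_convex G hsubG hposG hx hy ht hu htu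
    have h2 : lam (t • x + u • y) = t * lam x + u * lam y := by
      rw [map_add, map_smul, map_smul, smul_eq_mul, smul_eq_mul]
    simp only [smul_eq_mul]
    rw [h2]
    linarith
  · intro θ hθ α h1 h2
    have hAdm : Zah.Adm θ α := by
      refine ⟨h1, fun i => ?_⟩
      have hproj := ((EuclideanSpace.proj (𝕜 := ℝ) i).continuous.tendsto θ).comp h2
      have hθi : (EuclideanSpace.proj (𝕜 := ℝ) i) θ = θ i := rfl
      rw [hθi] at hproj
      refine Tendsto.congr (fun k => ?_) hproj
      show ((∑ j, (α k j : ℝ))⁻¹ • toR n (α k)) i = (α k i : ℝ) / Zah.sR (α k)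
      rw [PiLp.smul_apply, smul_eq_mul, div_eq_inv_mul]
      rfl
    have T := Zah.tendsto_cVal G hsubG hposG hθ hAdm
    have Tlam : Tendsto (fun k => lam ((∑ i, (α k i : ℝ))⁻¹ • toR n (α k))) atTop
        (nhds (lam θ)) := (hlamc.tendsto θ).comp h2
    have heq : (fun k => G (α k) / Zah.sR (α k) +
        lam ((∑ i, (α k i : ℝ))⁻¹ • toR n (α k))) =ᶠ[atTop]
        (fun k => F (α k) / ∑ i, (α k i : ℝ)) := by
      apply Eventually.of_forall
      intro k
      show G (α k) / Zah.sR (α k) +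
        lam ((∑ i, (α k i : ℝ))⁻¹ • toR n (α k)) = F (α k) / ∑ i, (α k i : ℝ)
      rw [map_smul, smul_eq_mul]
      show (F (α k) - lam (toR n (α k))) / Zah.sR (α k) +
        (Zah.sR (α k))⁻¹ * lam (toR n (α k)) = F (α k) / Zah.sR (α k)
      ring
    exact (T.add Tlam).congr' heq
end

section
/- Let O ⊆ ℝ^{n+1} be a nonempty open convex cone contained in the nonnegative orthant [0,∞)^{n+1}, let M > 0, and let F be a subadditive real-valued function on the set S := (O \ B(0,M)) ∩ ℕ^{n+1}, where B(0,M) is the Euclidean ball of radius M about the origin (note S is closed under addition). Then for every closed convex cone K ⊆ ℝ^{n+1} with K \ {0} ⊆ O there exists a constant C_K such that F(α) ≤ C_K·|α| for all α ∈ (K \ B(0,M)) ∩ ℕ^{n+1}. -/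
open Set Metric

lemma aux_coord_le_norm {n : ℕ} (x : EuclideanSpace ℝ (Fin (n + 1))) (i : Fin (n + 1)) :
    |x i| ≤ ‖x‖ := by
  rw [EuclideanSpace.norm_eq]
  have h1 : |x i| = Real.sqrt (‖x i‖ ^ 2) := by
    rw [Real.sqrt_sq (norm_nonneg _), Real.norm_eq_abs]
  rw [h1]
  exact Real.sqrt_le_sqrt (Finset.single_le_sum (f := fun j => ‖x j‖ ^ 2)
    (fun j _ => sq_nonneg _) (Finset.mem_univ i))

lemma aux_norm_le_sum {n : ℕ} (x : EuclideanSpace ℝ (Fin (n + 1))) (h : ∀ i, 0 ≤ x i) :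
    ‖x‖ ≤ ∑ i, x i := by
  rw [EuclideanSpace.norm_eq]
  have h1 : ∑ i, ‖x i‖ ^ 2 ≤ (∑ i, x i) ^ 2 := by
    have h2 : ∀ i ∈ Finset.univ, ‖x i‖ ^ 2 ≤ x i * ∑ j, x j := by
      intro i _
      rw [Real.norm_eq_abs, abs_of_nonneg (h i), sq]
      exact mul_le_mul_of_nonneg_left
        (Finset.single_le_sum (fun j _ => h j) (Finset.mem_univ i)) (h i)
    calc ∑ i, ‖x i‖ ^ 2 ≤ ∑ i, x i * ∑ j, x j := Finset.sum_le_sum h2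
      _ = (∑ i, x i) ^ 2 := by rw [← Finset.sum_mul, sq]
  calc Real.sqrt (∑ i, ‖x i‖ ^ 2) ≤ Real.sqrt ((∑ i, x i) ^ 2) := Real.sqrt_le_sqrt h1
    _ = ∑ i, x i := Real.sqrt_sq (Finset.sum_nonneg fun i _ => h i)

lemma aux_round {n : ℕ} (t : EuclideanSpace ℝ (Fin (n + 1))) (h : ∀ i, 0 ≤ t i) :
    ‖toR n (fun i => ⌈t i⌉₊) - t‖ ≤ Real.sqrt (n + 1) := by
  rw [EuclideanSpace.norm_eq]
  have h1 : ∀ i ∈ Finset.univ, ‖(toR n (fun i => ⌈t i⌉₊) - t) i‖ ^ 2 ≤ 1 := by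
    intro i _
    have hc : (toR n (fun i => ⌈t i⌉₊) - t) i = (⌈t i⌉₊ : ℝ) - t i := rfl
    rw [hc, Real.norm_eq_abs, abs_of_nonneg (by linarith [Nat.le_ceil (t i)])]
    nlinarith [Nat.le_ceil (t i), Nat.ceil_lt_add_one (h i)]
  calc Real.sqrt (∑ i, ‖(toR n (fun i => ⌈t i⌉₊) - t) i‖ ^ 2)
      ≤ Real.sqrt (∑ _i : Fin (n + 1), (1 : ℝ)) :=
        Real.sqrt_le_sqrt (Finset.sum_le_sum h1)
    _ = Real.sqrt (n + 1) := by simp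

set_option maxHeartbeats 2000000 in
/-- If `F` is subadditive on `S := (O \ B(0,M)) ∩ ℕ^{n+1}` where `O` is a nonempty open
convex cone inside the nonnegative orthant, then for every closed convex cone `K` with
`K \ {0} ⊆ O` there is `C_K` with `F(α) ≤ C_K·|α|` on `(K \ B(0,M)) ∩ ℕ^{n+1}`. -/
theorem linear_upper_bound_on_closed_subcone (n : ℕ) (O : Set (EuclideanSpace ℝ (Fin (n + 1))))
    (hO_open : IsOpen O) (hO_conv : Convex ℝ O) (hO_ne : O.Nonempty)
    (hO_orth : O ⊆ {x | ∀ i, 0 ≤ x i})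
    (hO_cone : ∀ c : ℝ, 0 < c → ∀ x ∈ O, c • x ∈ O)
    (M : ℝ) (hM : 0 < M)
    (F : (Fin (n + 1) → ℕ) → ℝ)
    (hsub : ∀ α β : Fin (n + 1) → ℕ, toR n α ∈ O \ ball 0 M → toR n β ∈ O \ ball 0 M →
      F (α + β) ≤ F α + F β) :
    ∀ K : Set (EuclideanSpace ℝ (Fin (n + 1))),
      IsClosed K → Convex ℝ K → (∀ c : ℝ, 0 ≤ c → ∀ x ∈ K, c • x ∈ K) →
      K \ {0} ⊆ O →
      ∃ C : ℝ, ∀ α : Fin (n + 1) → ℕ, toR n α ∈ K \ ball 0 M →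
        F α ≤ C * ∑ i, (α i : ℝ) := by
  intro K hKcl hKconv hKcone hKO
  by_cases hKne : K.Nonempty
  swap
  · exact ⟨0, fun α hα => absurd ⟨toR n α, hα.1⟩ hKne⟩
  -- compactness: uniform ε
  have hScomp : IsCompact (K ∩ sphere (0 : EuclideanSpace ℝ (Fin (n + 1))) 1) :=
    (isCompact_sphere 0 1).inter_left hKcl
  have hSO : K ∩ sphere (0 : EuclideanSpace ℝ (Fin (n + 1))) 1 ⊆ O := by
    rintro x ⟨hxK, hxs⟩
    apply hKO
    refine ⟨hxK, ?_⟩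
    simp only [mem_singleton_iff]
    intro hx0
    rw [mem_sphere, dist_zero_right, hx0, norm_zero] at hxs
    norm_num at hxs
  obtain ⟨δ, hδpos, hδO⟩ := hScomp.exists_thickening_subset_open hO_open hSO
  obtain ⟨ε, hεdef⟩ : ∃ x : ℝ, x = min (δ / 2) 2⁻¹ := ⟨_, rfl⟩
  have hεpos : 0 < ε := by rw [hεdef]; exact lt_min (by linarith) (by norm_num)
  have hεhalf : ε ≤ 2⁻¹ := by rw [hεdef]; exact min_le_right _ _
  have hεδ : ε < δ := by rw [hεdef]; exact lt_of_le_of_lt (min_le_left _ _) (by linarith)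
  have hε : ∀ y ∈ K, y ≠ 0 → ∀ z, dist z y ≤ ε * ‖y‖ → z ∈ O := by
    intro y hyK hy0 z hz
    have hyn : (0 : ℝ) < ‖y‖ := norm_pos_iff.mpr hy0
    have hu : ‖y‖⁻¹ • y ∈ K ∩ sphere (0 : EuclideanSpace ℝ (Fin (n + 1))) 1 := by
      refine ⟨hKcone _ (by positivity) y hyK, ?_⟩
      rw [mem_sphere, dist_zero_right, norm_smul, norm_inv, norm_norm,
        inv_mul_cancel₀ (ne_of_gt hyn)]
    have hw : ‖y‖⁻¹ • z ∈ O := by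
      apply hδO
      rw [mem_thickening_iff]
      refine ⟨‖y‖⁻¹ • y, hu, ?_⟩
      rw [dist_smul₀, norm_inv, norm_norm]
      calc ‖y‖⁻¹ * dist z y ≤ ‖y‖⁻¹ * (ε * ‖y‖) := by
            exact mul_le_mul_of_nonneg_left hz (by positivity)
        _ = ε := by field_simp
        _ < δ := hεδ
    have := hO_cone ‖y‖ hyn _ hw
    rwa [smul_inv_smul₀ (ne_of_gt hyn)] at this
  -- constants
  obtain ⟨σ, hσdef⟩ : ∃ x : ℝ, x = Real.sqrt (n + 1) := ⟨_, rfl⟩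
  have hσ1 : (1 : ℝ) ≤ σ := by
    have h0 : (1 : ℝ) ≤ (n : ℝ) + 1 := by linarith [Nat.cast_nonneg (α := ℝ) n]
    have h2 := Real.sqrt_le_sqrt h0
    rw [Real.sqrt_one] at h2
    rw [hσdef]; exact h2
  have hσpos : (0 : ℝ) < σ := by linarith
  obtain ⟨s, hsdef⟩ : ∃ x : ℝ, x = 2 * σ / ε + 2 * M + 2 := ⟨_, rfl⟩
  have hspos : (0 : ℝ) < s := by
    have h0 : 0 ≤ 2 * σ / ε := div_nonneg (by linarith) hεpos.le
    rw [hsdef]; linarith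
  obtain ⟨c, hcdef⟩ : ∃ x : ℝ, x = ε * s / 2 := ⟨_, rfl⟩
  have hσc : σ ≤ c := by
    have h1 : 2 * σ / ε ≤ s := by rw [hsdef]; linarith
    have h2 : 2 * σ ≤ ε * s := by
      rw [div_le_iff₀ hεpos] at h1
      rw [mul_comm]; linarith
    rw [hcdef]; linarith
  have hcpos : (0 : ℝ) < c := by linarith
  have h2c : c + c = ε * s := by rw [hcdef]; ring
  obtain ⟨D, hDdef⟩ : ∃ x : ℝ, x = c + σ := ⟨_, rfl⟩
  have hDpos : (0 : ℝ) < D := by rw [hDdef]; linarith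
  have hsM : 2 * M ≤ s := by
    have h0 : 0 ≤ 2 * σ / ε := div_nonneg (by linarith) hεpos.le
    rw [hsdef]; linarith
  have hs2 : (2 : ℝ) ≤ s := by
    have h0 : 0 ≤ 2 * σ / ε := div_nonneg (by linarith) hεpos.le
    rw [hsdef]; linarith
  have hεs_half : ε * s ≤ s / 2 := by
    calc ε * s ≤ 2⁻¹ * s := mul_le_mul_of_nonneg_right hεhalf (le_of_lt hspos)
      _ = s / 2 := by ring
  obtain ⟨R, hRdef⟩ : ∃ x : ℝ, x = 3 * D / ε + M + 3 * s + D := ⟨_, rfl⟩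
  have h3D : ε * (3 * D / ε) = 3 * D := by field_simp
  have h3Dnn : 0 ≤ 3 * D / ε := div_nonneg (by linarith) hεpos.le
  have hRpos : (0 : ℝ) < R := by rw [hRdef]; linarith
  -- membership lemma for points near K
  have hA : ∀ z : EuclideanSpace ℝ (Fin (n + 1)),
      infDist z K ≤ D → 3 * D / ε ≤ ‖z‖ → z ∈ O := by
    intro z hzd hzn
    obtain ⟨y, hyK, hy⟩ := hKcl.exists_infDist_eq_dist hKne z
    have hzy : dist z y ≤ D := by rw [← hy]; exact hzd
    have hy0 : y ≠ 0 := by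
      intro h0
      rw [h0, dist_zero_right] at hzy
      have h6 : 3 * D ≤ ε * ‖z‖ := by
        rw [← h3D]; exact mul_le_mul_of_nonneg_left hzn (le_of_lt hεpos)
      have h7 : ε * ‖z‖ ≤ 2⁻¹ * ‖z‖ := mul_le_mul_of_nonneg_right hεhalf (norm_nonneg _)
      linarith
    apply hε y hyK hy0 z
    have h8 : ‖z‖ - D ≤ ‖y‖ := by
      have := norm_sub_norm_le z y
      rw [← dist_eq_norm] at this
      linarith
    have h9 : 3 * D ≤ ε * ‖z‖ := by
      rw [← h3D]; exact mul_le_mul_of_nonneg_left hzn (le_of_lt hεpos)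
    have h10 : ε * (‖z‖ - D) ≤ ε * ‖y‖ := mul_le_mul_of_nonneg_left h8 (le_of_lt hεpos)
    have h11 : ε * D ≤ D := by
      calc ε * D ≤ 2⁻¹ * D := mul_le_mul_of_nonneg_right hεhalf (le_of_lt hDpos)
        _ ≤ D := by linarith
    calc dist z y ≤ D := hzy
      _ ≤ ε * ‖z‖ - ε * D := by linarith
      _ = ε * (‖z‖ - D) := by ring
      _ ≤ ε * ‖y‖ := h10
  -- the finite bound
  obtain ⟨N, hNdef⟩ : ∃ x : ℕ, x = ⌈R + 2 * s⌉₊ := ⟨_, rfl⟩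
  obtain ⟨C₀, hC₀def⟩ : ∃ x : ℝ, x = Finset.univ.sup' (Finset.univ_nonempty)
      (fun v : Fin (n + 1) → Fin (N + 1) => F (fun i => (v i : ℕ))) := ⟨_, rfl⟩
  obtain ⟨C, hCdef⟩ : ∃ x : ℝ, x = max C₀ 0 := ⟨_, rfl⟩
  have hC0 : (0 : ℝ) ≤ C := by rw [hCdef]; exact le_max_right _ _
  have hFC : ∀ β : Fin (n + 1) → ℕ, (∀ i, (β i : ℝ) ≤ R + 2 * s) → F β ≤ C := by
    intro β hβ
    have hβN : ∀ i, β i < N + 1 := by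
      intro i
      have h1 : (β i : ℝ) ≤ (N : ℝ) := by
        rw [hNdef]; exact le_trans (hβ i) (Nat.le_ceil _)
      exact Nat.lt_succ_of_le (Nat.cast_le.mp h1)
    rw [hCdef]
    refine le_trans ?_ (le_max_left C₀ 0)
    rw [hC₀def]
    exact Finset.le_sup' (fun v : Fin (n + 1) → Fin (N + 1) => F (fun i => (v i : ℕ)))
      (Finset.mem_univ (fun i => (⟨β i, hβN i⟩ : Fin (N + 1))))
  -- main induction
  have main : ∀ m : ℕ, ∀ α : Fin (n + 1) → ℕ, (∑ i, α i) = m →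
      infDist (toR n α) K ≤ D → M ≤ ‖toR n α‖ → F α ≤ C * ∑ i, (α i : ℝ) := by
    intro m
    induction m using Nat.strong_induction_on with
    | _ m ih =>
      intro α hm hd hMα
      have hsumℝ1 : (1 : ℝ) ≤ ∑ i, (α i : ℝ) := by
        by_contra hlt
        push_neg at hlt
        have hαnn : ∀ i ∈ Finset.univ, (0 : ℝ) ≤ (α i : ℝ) := fun i _ => Nat.cast_nonneg _
        have h0 : ∀ i ∈ Finset.univ, (α i : ℝ) = 0 := by
          intro i hi
          by_contra hne
          have h1 : (1 : ℝ) ≤ (α i : ℝ) := by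
            have : 1 ≤ α i := Nat.one_le_iff_ne_zero.mpr (by exact_mod_cast hne)
            exact_mod_cast this
          have := Finset.single_le_sum hαnn hi
          linarith
        have hz : toR n α = 0 := by
          ext i
          exact h0 i (Finset.mem_univ i)
        rw [hz, norm_zero] at hMα
        linarith
      by_cases hbig : R ≤ ‖toR n α‖
      · -- step case
        obtain ⟨a, hadef⟩ : ∃ x, x = toR n α := ⟨_, rfl⟩
        rw [← hadef] at hd hMα hbig
        obtain ⟨y, hyK, hy⟩ := hKcl.exists_infDist_eq_dist hKne a
        have hay : dist a y ≤ D := by rw [← hy]; exact hd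
        have hyn : ‖a‖ - D ≤ ‖y‖ := by
          have := norm_sub_norm_le a y
          rw [← dist_eq_norm] at this
          linarith
        have hys : s ≤ ‖y‖ := by
          have : s + D ≤ R := by rw [hRdef]; linarith
          linarith
        have hypos : (0 : ℝ) < ‖y‖ := by linarith
        have hy0 : y ≠ 0 := norm_pos_iff.mp hypos
        -- the error part
        obtain ⟨e', he'def⟩ : ∃ x : EuclideanSpace ℝ (Fin (n + 1)),
          x = (min (dist a y) c / dist a y) • (a - y) := ⟨_, rfl⟩
        have he'c : ‖e'‖ ≤ c := by
          rcases eq_or_lt_of_le (dist_nonneg (x := a) (y := y)) with hd0 | hd0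
          · rw [he'def, ← hd0, min_eq_left hcpos.le]
            simp [hcpos.le]
          · rw [he'def, norm_smul, Real.norm_eq_abs,
              abs_of_nonneg (div_nonneg (le_min dist_nonneg hcpos.le) dist_nonneg),
              ← dist_eq_norm, div_mul_cancel₀ _ (ne_of_gt hd0)]
            exact min_le_right _ _
        have he'rest : ‖(a - y) - e'‖ ≤ σ := by
          rcases eq_or_lt_of_le (dist_nonneg (x := a) (y := y)) with hd0 | hd0
          · have hay0 : a - y = 0 := by
              have h : dist a y = 0 := hd0.symm
              rwa [dist_eq_norm, norm_eq_zero] at h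
            rw [he'def, hay0]
            simp [hσpos.le]
          · have hval : (a - y) - (min (dist a y) c / dist a y) • (a - y)
                = (1 - min (dist a y) c / dist a y) • (a - y) := by
              rw [sub_smul, one_smul]
            have hratio : min (dist a y) c / dist a y ≤ 1 := by
              rw [div_le_one hd0]
              exact min_le_left _ _
            rw [he'def, hval, norm_smul, Real.norm_eq_abs, ← dist_eq_norm,
              abs_of_nonneg (by linarith)]
            have hexp : (1 - min (dist a y) c / dist a y) * dist a y
                = dist a y - min (dist a y) c := by
              field_simp
            rw [hexp]
            have : dist a y - c ≤ σ := by rw [hDdef] at hay; linarith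
            rcases le_total (dist a y) c with h | h
            · rw [min_eq_left h]; simp [hσpos.le]
            · rw [min_eq_right h]; linarith
        -- the reference point on K
        obtain ⟨y', hy'def⟩ : ∃ x : EuclideanSpace ℝ (Fin (n + 1)),
          x = (s / ‖y‖) • y := ⟨_, rfl⟩
        have hy'K : y' ∈ K := by
          rw [hy'def]; exact hKcone _ (div_nonneg (by linarith) (norm_nonneg _)) y hyK
        have hy'norm : ‖y'‖ = s := by
          rw [hy'def, norm_smul, Real.norm_eq_abs,
            abs_of_nonneg (div_nonneg (by linarith) (norm_nonneg _)),
            div_mul_cancel₀ _ (ne_of_gt hypos)]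
        have hy'0 : y' ≠ 0 := by
          intro h0; rw [h0, norm_zero] at hy'norm; linarith
        -- the target point
        obtain ⟨t, htdef⟩ : ∃ x : EuclideanSpace ℝ (Fin (n + 1)), x = y' + e' := ⟨_, rfl⟩
        have htO : t ∈ O := by
          apply hε y' hy'K hy'0
          rw [dist_eq_norm, htdef, add_sub_cancel_left, hy'norm]
          linarith
        have htnn : ∀ i, 0 ≤ t i := hO_orth htO
        -- the lattice step
        obtain ⟨γ, hγdef⟩ : ∃ x : Fin (n + 1) → ℕ, x = fun i => ⌈t i⌉₊ := ⟨_, rfl⟩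
        obtain ⟨g, hgdef⟩ : ∃ x : EuclideanSpace ℝ (Fin (n + 1)), x = toR n γ := ⟨_, rfl⟩
        have hgt : ‖g - t‖ ≤ σ := by
          rw [hgdef, hγdef, hσdef]; exact aux_round t htnn
        have hgy' : dist g y' ≤ c + σ := by
          have hty' : dist t y' = ‖e'‖ := by
            rw [dist_eq_norm, htdef, add_sub_cancel_left]
          calc dist g y' ≤ dist g t + dist t y' := dist_triangle _ _ _
            _ ≤ σ + c := by
                rw [dist_eq_norm, hty']
                exact add_le_add hgt he'c
            _ = c + σ := by ring
        have hgO : g ∈ O := by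
          apply hε y' hy'K hy'0
          rw [hy'norm, ← h2c]
          linarith
        have hg_lo : s / 2 ≤ ‖g‖ := by
          have h1 := dist_triangle y' g (0 : EuclideanSpace ℝ (Fin (n + 1)))
          rw [dist_zero_right, dist_zero_right, dist_comm y' g] at h1
          rw [hy'norm] at h1
          have h2 : c + σ ≤ ε * s := by rw [← h2c]; linarith
          linarith
        have hg_hi : ‖g‖ ≤ 2 * s := by
          have h1 := dist_triangle g y' (0 : EuclideanSpace ℝ (Fin (n + 1)))
          rw [dist_zero_right, dist_zero_right, hy'norm] at h1
          have h2 : c + σ ≤ ε * s := by rw [← h2c]; linarith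
          linarith
        have hgM : M ≤ ‖g‖ := by linarith
        have hg1 : (1 : ℝ) ≤ ‖g‖ := by linarith
        -- the reduced point
        obtain ⟨a2, ha2def⟩ : ∃ x : EuclideanSpace ℝ (Fin (n + 1)), x = a - g := ⟨_, rfl⟩
        obtain ⟨y2, hy2def⟩ : ∃ x : EuclideanSpace ℝ (Fin (n + 1)), x = y - y' := ⟨_, rfl⟩
        have hy2K : y2 ∈ K := by
          have hval : y2 = (1 - s / ‖y‖) • y := by
            rw [hy2def, hy'def, sub_smul, one_smul]
          rw [hval]
          apply hKcone _ _ y hyK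
          have : s / ‖y‖ ≤ 1 := by rw [div_le_one hypos]; linarith
          linarith
        have hd2 : infDist a2 K ≤ 2 * σ := by
          have h1 : infDist a2 K ≤ dist a2 y2 := infDist_le_dist_of_mem hy2K
          have h2 : a2 - y2 = ((a - y) - e') - (g - t) := by
            rw [ha2def, hy2def, htdef]; abel
          have h3 : dist a2 y2 ≤ 2 * σ := by
            rw [dist_eq_norm, h2]
            calc ‖((a - y) - e') - (g - t)‖ ≤ ‖(a - y) - e'‖ + ‖g - t‖ := norm_sub_le _ _
              _ ≤ σ + σ := add_le_add he'rest hgt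
              _ = 2 * σ := by ring
          linarith
        have hd2D : infDist a2 K ≤ D := by
          rw [hDdef]; linarith
        have ha2n : ‖a‖ - 2 * s ≤ ‖a2‖ := by
          have := norm_sub_norm_le a g
          rw [ha2def]
          linarith
        have ha2M : M ≤ ‖a2‖ := by
          have : 2 * s + M ≤ R := by rw [hRdef]; linarith
          linarith
        have ha2big : 3 * D / ε ≤ ‖a2‖ := by
          have : 2 * s + 3 * D / ε ≤ R := by rw [hRdef]; linarith
          linarith
        have ha2O : a2 ∈ O := hA a2 hd2D ha2big
        -- coordinatewise domination
        have hγα : ∀ i, γ i ≤ α i := by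
          intro i
          have h1 : 0 ≤ a2 i := hO_orth ha2O i
          have h2 : a2 i = (α i : ℝ) - (γ i : ℝ) := by rw [ha2def, hadef, hgdef]; rfl
          rw [h2] at h1
          exact Nat.cast_le.mp (by linarith : (γ i : ℝ) ≤ (α i : ℝ))
        obtain ⟨α', hα'def⟩ : ∃ x : Fin (n + 1) → ℕ, x = fun i => α i - γ i := ⟨_, rfl⟩
        have hα'R : toR n α' = a2 := by
          rw [hα'def, ha2def, hadef, hgdef]
          ext i
          show ((α i - γ i : ℕ) : ℝ) = (toR n α - toR n γ) i
          rw [Nat.cast_sub (hγα i)]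
          rfl
        have hsumeq : α' + γ = α := by
          rw [hα'def]
          funext i
          exact Nat.sub_add_cancel (hγα i)
        -- apply subadditivity
        have hgball : g ∉ ball (0 : EuclideanSpace ℝ (Fin (n + 1))) M := by
          rw [mem_ball_zero_iff]; push_neg; linarith
        have ha2ball : a2 ∉ ball (0 : EuclideanSpace ℝ (Fin (n + 1))) M := by
          rw [mem_ball_zero_iff]; push_neg; linarith
        have hF1 : F α ≤ F α' + F γ := by
          have := hsub α' γ (by rw [hα'R]; exact ⟨ha2O, ha2ball⟩)
            (by rw [← hgdef]; exact ⟨hgO, hgball⟩)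
          rwa [hsumeq] at this
        -- sums
        have hsumnat : ∑ i, α i = (∑ i, α' i) + ∑ i, γ i := by
          rw [← hsumeq, ← Finset.sum_add_distrib]
          rfl
        have hγsum1 : 1 ≤ ∑ i, γ i := by
          by_contra h0
          push_neg at h0
          have h : (∑ i, γ i) = 0 := by omega
          have hz : ∀ i ∈ Finset.univ, γ i = 0 := by
            rw [← Finset.sum_eq_zero_iff]; exact h
          have hg0 : g = 0 := by
            rw [hgdef]
            ext i
            show ((γ i : ℕ) : ℝ) = 0
            rw [hz i (Finset.mem_univ i)]
            norm_num
          rw [hg0, norm_zero] at hg1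
          linarith
        have hlt : ∑ i, α' i < m := by omega
        have hih : F α' ≤ C * ∑ i, (α' i : ℝ) := by
          apply ih _ hlt α' rfl
          · rw [hα'R]; exact hd2D
          · rw [hα'R]; exact ha2M
        have hFγ : F γ ≤ C := by
          apply hFC
          intro i
          have h1 : (γ i : ℝ) ≤ ‖g‖ := by
            have h3 := aux_coord_le_norm g i
            have h2 : g i = (γ i : ℝ) := by rw [hgdef]; rfl
            rw [h2, abs_of_nonneg (Nat.cast_nonneg _)] at h3
            exact h3
          linarith
        have hγsumℝ : (1 : ℝ) ≤ ∑ i, (γ i : ℝ) := by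
          have h1 : ((1 : ℕ) : ℝ) ≤ ((∑ i, γ i : ℕ) : ℝ) := Nat.cast_le.mpr hγsum1
          push_cast at h1
          linarith
        have hsumℝ : ∑ i, (α i : ℝ) = (∑ i, (α' i : ℝ)) + ∑ i, (γ i : ℝ) := by
          have h1 := congrArg (fun k : ℕ => (k : ℝ)) hsumnat
          push_cast at h1
          linarith
        have hCγ : C ≤ C * ∑ i, (γ i : ℝ) := by
          calc C = C * 1 := (mul_one C).symm
            _ ≤ C * ∑ i, (γ i : ℝ) := mul_le_mul_of_nonneg_left hγsumℝ hC0
        calc F α ≤ F α' + F γ := hF1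
          _ ≤ C * ∑ i, (α' i : ℝ) + C := by linarith
          _ ≤ C * ∑ i, (α' i : ℝ) + C * ∑ i, (γ i : ℝ) := by linarith
          _ = C * ∑ i, (α i : ℝ) := by rw [hsumℝ]; ring
      · -- base case
        push_neg at hbig
        have hFα : F α ≤ C := by
          apply hFC
          intro i
          have h1 : (α i : ℝ) ≤ ‖toR n α‖ := by
            have h3 := aux_coord_le_norm (toR n α) i
            have h2 : toR n α i = (α i : ℝ) := rfl
            rw [h2, abs_of_nonneg (Nat.cast_nonneg _)] at h3
            exact h3
          have h0 : (0 : ℝ) ≤ 2 * s := by linarith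
          linarith
        calc F α ≤ C := hFα
          _ = C * 1 := (mul_one C).symm
          _ ≤ C * ∑ i, (α i : ℝ) := mul_le_mul_of_nonneg_left hsumℝ1 hC0
  -- conclusion
  refine ⟨C, fun α hα => ?_⟩
  apply main (∑ i, α i) α rfl
  · rw [infDist_zero_of_mem hα.1]
    linarith
  · have h1 := hα.2
    rw [mem_ball_zero_iff] at h1
    push_neg at h1
    linarith
end

section
/- Let O ⊆ ℝ^{n+1} be a nonempty open convex cone contained in the nonnegative orthant [0,∞)^{n+1}, let M > 0, and let F be a subadditive real-valued function on S := (O \ B(0,M)) ∩ ℕ^{n+1} satisfying F(β) ≥ C·|β| for all β ∈ S, for some constant C. Then for every p ∈ O with |p| = 1 there exists a real number L such that for every sequence α(k) ∈ S with |α(k)| → ∞ and α(k)/|α(k)| → p, one has F(α(k))/|α(k)| → L; in particular the limit exists and depends only on F and p. -/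
open Set Metric Filter

/-- The sum of the coordinates of a vector, denoted `|·|` in the paper. -/
noncomputable def coordSum (n : ℕ) (x : EuclideanSpace ℝ (Fin (n + 1))) : ℝ :=
  ∑ i, x i

namespace SubAux

variable {n : ℕ} {O : Set (EuclideanSpace ℝ (Fin (n+1)))} {M : ℝ}

lemma csum_toR (β : Fin (n+1) → ℕ) : coordSum n (toR n β) = ∑ i, (β i : ℝ) := rfl

lemma csum_add (x y : EuclideanSpace ℝ (Fin (n+1))) :
    coordSum n (x + y) = coordSum n x + coordSum n y := by
  simp [coordSum, Finset.sum_add_distrib]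

lemma csum_smul (c : ℝ) (x : EuclideanSpace ℝ (Fin (n+1))) :
    coordSum n (c • x) = c * coordSum n x := by
  simp [coordSum, Finset.mul_sum]

lemma csum_sub (x y : EuclideanSpace ℝ (Fin (n+1))) :
    coordSum n (x - y) = coordSum n x - coordSum n y := by
  simp [coordSum, Finset.sum_sub_distrib]

lemma csum_nonneg (x : EuclideanSpace ℝ (Fin (n+1))) (hx : ∀ i, 0 ≤ x i) :
    0 ≤ coordSum n x := Finset.sum_nonneg fun i _ => hx i

lemma toR_add (a b : Fin (n+1) → ℕ) : toR n (a + b) = toR n a + toR n b := by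
  ext i; simp [toR]

lemma coord_abs_le_norm (x : EuclideanSpace ℝ (Fin (n+1))) (i : Fin (n+1)) : |x i| ≤ ‖x‖ := by
  rw [EuclideanSpace.norm_eq]
  rw [show |x i| = Real.sqrt (|x i|^2) by rw [Real.sqrt_sq_eq_abs]; rw [abs_abs]]
  apply Real.sqrt_le_sqrt
  have : |x i|^2 = ‖x i‖^2 := by rw [Real.norm_eq_abs]
  rw [this]
  exact Finset.single_le_sum (f := fun j => ‖x j‖^2) (fun j _ => by positivity) (Finset.mem_univ i)

lemma norm_le_csum (x : EuclideanSpace ℝ (Fin (n+1))) (hx : ∀ i, 0 ≤ x i) :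
    ‖x‖ ≤ coordSum n x := by
  rw [EuclideanSpace.norm_eq, show coordSum n x = Real.sqrt ((coordSum n x)^2) by
    rw [Real.sqrt_sq]; exact Finset.sum_nonneg fun i _ => hx i]
  apply Real.sqrt_le_sqrt
  calc ∑ i, ‖x i‖^2 = ∑ i, (x i)^2 := by
        congr 1; funext i; rw [Real.norm_eq_abs, sq_abs]
    _ ≤ (∑ i, x i)^2 := Finset.sum_sq_le_sq_sum_of_nonneg (fun i _ => hx i)
    _ = (coordSum n x)^2 := rfl

lemma csum_le_norm (x : EuclideanSpace ℝ (Fin (n+1))) :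
    coordSum n x ≤ (n+1) * ‖x‖ := by
  calc coordSum n x = ∑ i, x i := rfl
    _ ≤ ∑ _i : Fin (n+1), ‖x‖ := Finset.sum_le_sum fun i _ =>
        (le_abs_self _).trans (coord_abs_le_norm x i)
    _ = (n+1) * ‖x‖ := by simp [Finset.sum_const, Finset.card_univ]

lemma norm_mono_nonneg (a b : EuclideanSpace ℝ (Fin (n+1)))
    (ha : ∀ i, 0 ≤ a i) (hab : ∀ i, a i ≤ b i) : ‖a‖ ≤ ‖b‖ := by
  rw [EuclideanSpace.norm_eq, EuclideanSpace.norm_eq]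
  apply Real.sqrt_le_sqrt
  apply Finset.sum_le_sum
  intro i _
  have := ha i; have := hab i
  simp only [Real.norm_eq_abs, sq_abs]
  nlinarith

lemma norm_le_of_coords (x : EuclideanSpace ℝ (Fin (n+1))) (c : ℝ) (hc : 0 ≤ c)
    (h : ∀ i, |x i| ≤ c) : ‖x‖ ≤ (n+1) * c := by
  rw [EuclideanSpace.norm_eq]
  have h1 : ∑ i, ‖x i‖^2 ≤ ((n+1:ℝ)*c)^2 := by
    calc ∑ i, ‖x i‖^2 ≤ ∑ _i : Fin (n+1), c^2 := by
          apply Finset.sum_le_sum; intro i _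
          rw [Real.norm_eq_abs]
          have := h i; have := abs_nonneg (x i); nlinarith
      _ = (n+1) * c^2 := by simp [Finset.sum_const, Finset.card_univ]
      _ ≤ ((n+1:ℝ)*c)^2 := by nlinarith [sq_nonneg c]
  calc Real.sqrt (∑ i, ‖x i‖^2) ≤ Real.sqrt (((n+1:ℝ)*c)^2) := Real.sqrt_le_sqrt h1
    _ = (n+1)*c := Real.sqrt_sq (by positivity)

lemma Omem (hO_cone : ∀ c : ℝ, 0 < c → ∀ x ∈ O, c • x ∈ O)
    {p : EuclideanSpace ℝ (Fin (n+1))} {ε : ℝ} (hball : ball p ε ⊆ O)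
    (x : EuclideanSpace ℝ (Fin (n+1))) (τ : ℝ) (hτ : 0 < τ)
    (hdir : ‖τ⁻¹ • x - p‖ < ε) : x ∈ O := by
  have h1 : τ⁻¹ • x ∈ ball p ε := by
    rw [mem_ball, dist_eq_norm]; exact hdir
  have h2 := hO_cone τ hτ _ (hball h1)
  rwa [smul_inv_smul₀ (ne_of_gt hτ)] at h2

lemma add_mem_O (hO_conv : Convex ℝ O) (hO_cone : ∀ c : ℝ, 0 < c → ∀ x ∈ O, c • x ∈ O)
    {x y} (hx : x ∈ O) (hy : y ∈ O) : x + y ∈ O := by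
  have h := hO_conv hx hy (by norm_num : (0:ℝ) ≤ 1/2) (by norm_num : (0:ℝ) ≤ 1/2) (by norm_num)
  have h2 := hO_cone 2 (by norm_num) _ h
  have : (2:ℝ) • ((1/2 : ℝ) • x + (1/2 : ℝ) • y) = x + y := by module
  rwa [this] at h2

lemma S_add (hO_conv : Convex ℝ O) (hO_cone : ∀ c : ℝ, 0 < c → ∀ x ∈ O, c • x ∈ O)
    (hO_orth : O ⊆ {x | ∀ i, 0 ≤ x i}) (hM : 0 < M)
    {x y : EuclideanSpace ℝ (Fin (n+1))} (hx : x ∈ O \ ball 0 M) (hy : y ∈ O \ ball 0 M) :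
    x + y ∈ O \ ball 0 M := by
  refine ⟨add_mem_O hO_conv hO_cone hx.1 hy.1, ?_⟩
  intro hb
  rw [mem_ball_zero_iff] at hb
  have h1 : ‖x‖ ≤ ‖x + y‖ := by
    apply norm_mono_nonneg _ _ (fun i => hO_orth hx.1 i)
    intro i
    have := hO_orth hy.1 i
    have : x i ≤ x i + y i := by linarith
    simpa using this
  have h2 : ¬ (‖x‖ < M) := by
    intro h; exact hx.2 (mem_ball_zero_iff.mpr h)
  linarith

variable {F : (Fin (n + 1) → ℕ) → ℝ}

lemma chain_smul (hO_conv : Convex ℝ O) (hO_cone : ∀ c : ℝ, 0 < c → ∀ x ∈ O, c • x ∈ O)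
    (hO_orth : O ⊆ {x | ∀ i, 0 ≤ x i}) (hM : 0 < M)
    (hsub : ∀ α β : Fin (n + 1) → ℕ, toR n α ∈ O \ ball 0 M → toR n β ∈ O \ ball 0 M →
      F (α + β) ≤ F α + F β)
    {q r : Fin (n+1) → ℕ} (hq : toR n q ∈ O \ ball 0 M) (hr : toR n r ∈ O \ ball 0 M)
    (m : ℕ) :
    toR n (m • q + r) ∈ O \ ball 0 M ∧ F (m • q + r) ≤ m * F q + F r := by
  induction m with
  | zero => simpa using hr
  | succ m ih =>
    have heq : (m+1) • q + r = q + (m • q + r) := by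
      rw [succ_nsmul]; abel
    rw [heq]
    constructor
    · rw [toR_add]; exact S_add hO_conv hO_cone hO_orth hM hq ih.1
    · calc F (q + (m • q + r)) ≤ F q + F (m • q + r) := hsub _ _ hq ih.1
        _ ≤ F q + (m * F q + F r) := by linarith [ih.2]
        _ = (m+1 : ℕ) * F q + F r := by push_cast; ring

lemma chain_sum (hO_conv : Convex ℝ O) (hO_cone : ∀ c : ℝ, 0 < c → ∀ x ∈ O, c • x ∈ O)
    (hO_orth : O ⊆ {x | ∀ i, 0 ≤ x i}) (hM : 0 < M)
    (hsub : ∀ α β : Fin (n + 1) → ℕ, toR n α ∈ O \ ball 0 M → toR n β ∈ O \ ball 0 M →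
      F (α + β) ≤ F α + F β)
    (v : Fin (n+1) → (Fin (n+1) → ℕ)) (g : Fin (n+1) → ℕ)
    (hv : ∀ i, toR n (v i) ∈ O \ ball 0 M)
    {r : Fin (n+1) → ℕ} (hr : toR n r ∈ O \ ball 0 M) :
    toR n (∑ i, g i • v i + r) ∈ O \ ball 0 M ∧
      F (∑ i, g i • v i + r) ≤ ∑ i, (g i : ℝ) * F (v i) + F r := by
  classical
  suffices h : ∀ s : Finset (Fin (n+1)), toR n (∑ i ∈ s, g i • v i + r) ∈ O \ ball 0 M ∧
      F (∑ i ∈ s, g i • v i + r) ≤ ∑ i ∈ s, (g i : ℝ) * F (v i) + F r from h Finset.univ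
  intro s
  induction s using Finset.induction with
  | empty => simpa using hr
  | insert a s' hnotmem ih =>
    rw [Finset.sum_insert hnotmem, Finset.sum_insert hnotmem]
    have heq : g a • v a + ∑ i ∈ s', g i • v i + r = g a • v a + (∑ i ∈ s', g i • v i + r) := by
      abel
    rw [heq]
    obtain ⟨hmem, hle⟩ := chain_smul hO_conv hO_cone hO_orth hM hsub (hv a) ih.1 (g a)
    exact ⟨hmem, hle.trans (by linarith [ih.2])⟩


lemma toR_apply (a : Fin (n+1) → ℕ) (i : Fin (n+1)) : toR n a i = (a i : ℝ) := rfl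

lemma csum_single (i : Fin (n+1)) :
    coordSum n (EuclideanSpace.single i (1:ℝ)) = 1 := by
  unfold coordSum
  rw [Finset.sum_congr rfl (fun j _ => EuclideanSpace.single_apply i 1 j)]
  simp

lemma csum_sum {ι : Type*} (s : Finset ι) (f : ι → EuclideanSpace ℝ (Fin (n+1))) :
    coordSum n (∑ i ∈ s, f i) = ∑ i ∈ s, coordSum n (f i) := by
  classical
  induction s using Finset.induction with
  | empty => simp [coordSum]
  | insert a s' hne ih => rw [Finset.sum_insert hne, csum_add, ih, Finset.sum_insert hne]


set_option maxHeartbeats 4000000 in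
lemma UBcore (hO_conv : Convex ℝ O) (hO_cone : ∀ c : ℝ, 0 < c → ∀ x ∈ O, c • x ∈ O)
    (hO_orth : O ⊆ {x | ∀ i, 0 ≤ x i}) (hM : 0 < M)
    (hsub : ∀ α β : Fin (n + 1) → ℕ, toR n α ∈ O \ ball 0 M → toR n β ∈ O \ ball 0 M →
      F (α + β) ≤ F α + F β)
    {p : EuclideanSpace ℝ (Fin (n+1))} {ε : ℝ} (hε : 0 < ε) (hε1 : ε ≤ 1)
    (hpm : ∀ i, ε/2 ≤ p i) (hpcoord : ∀ i, p i ≤ 1)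
    (rT rN P σw : ℝ) (hTpos : 0 < rT) (hNpos : 0 < rN)
    (hTa : 2000*((n:ℝ)+1) ≤ ε^2*rT) (hTb : 16 ≤ ε*rT) (hTc : (n:ℝ)+1 ≤ rT)
    (hN1 : ε*rT/16 ≤ rN) (hN2' : rN ≤ ε*rT/8)
    (hσw1 : rT ≤ σw) (hPdef : P = σw + rN) (hPhigh : P ≤ rT + ((n:ℝ)+1) + rN) (hPpos : 0 < P)
    (w : Fin (n+1) → ℕ) (hwsum : coordSum n (toR n w) = σw)
    (hw2 : ∀ i, ((w i : ℕ):ℝ) ≤ rT * p i + 1)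
    (v : Fin (n+1) → (Fin (n+1) → ℕ))
    (hvval : ∀ i j, ((v i j : ℕ):ℝ) = ((w j : ℕ):ℝ) + (if j = i then rN else 0))
    (hvS : ∀ i, toR n (v i) ∈ O \ ball 0 M)
    (hσv : ∀ i, coordSum n (toR n (v i)) = P)
    (R0 : ℝ) (hR0 : 2*((n:ℝ)+1)*P ≤ R0)
    (B₁ : ℝ) (hB₁ : ∀ γ : Fin (n+1) → ℕ, (∀ j, ((γ j : ℕ):ℝ) ≤ R0) → F γ ≤ B₁)
    (Fmax : ℝ) (hFmax0 : 0 ≤ Fmax) (hFmaxi : ∀ i, F (v i) ≤ Fmax)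
    (β : Fin (n+1) → ℕ) (hβS : toR n β ∈ O \ ball 0 M)
    (ht64 : 64*rT/ε ≤ coordSum n (toR n β))
    (htB : |B₁| + 1 ≤ coordSum n (toR n β))
    (hdir : ‖(coordSum n (toR n β))⁻¹ • toR n β - p‖ ≤ ε^2/1000) :
    F β ≤ (Fmax + 1) * coordSum n (toR n β) := by
  classical
  set x : EuclideanSpace ℝ (Fin (n+1)) := toR n β with hxdef
  set t : ℝ := coordSum n x with htdef
  have htpos : 0 < t := lt_of_lt_of_le (by positivity) htB
  have hxnonneg : ∀ i, 0 ≤ x i := fun i => by rw [hxdef, toR_apply]; positivity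
  have hxlow : ∀ i, t * (p i - ε^2/1000) ≤ x i := by
    intro i
    have h := (abs_le.mp ((coord_abs_le_norm _ i).trans hdir)).1
    have h2 : (t⁻¹ • x - p) i = t⁻¹ * x i - p i := by
      simp [PiLp.sub_apply, PiLp.smul_apply]
    rw [h2] at h
    have h3 : x i = t * (t⁻¹ * x i) := by field_simp
    nlinarith
  set s : ℝ := t / P with hsdef
  have hspos : 0 < s := div_pos htpos hPpos
  set c : Fin (n+1) → ℝ := fun i => (x i - s * ((w i : ℕ):ℝ)) / rN with hcdef
  have hwsum' : ∑ i, ((w i : ℕ):ℝ) = σw := by rw [← hwsum]; rfl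
  have hsum_c : ∑ i, c i = s := by
    have h1 : ∑ i, c i = ((∑ i, x i) - s * σw)/rN := by
      rw [hcdef, ← Finset.sum_div, Finset.sum_sub_distrib, ← Finset.mul_sum, hwsum']
    have h2 : ∑ i, x i = t := rfl
    rw [h1, h2, hsdef, hPdef]
    have hσpos : σw + rN ≠ 0 := by intro h; rw [hPdef] at hPpos; linarith
    field_simp
    ring
  have hkey : ∀ j, ∑ i, c i * ((v i j : ℕ):ℝ) = x j := by
    intro j
    have h1 : ∀ i, c i * ((v i j : ℕ):ℝ)
        = c i * ((w j : ℕ):ℝ) + (if j = i then c i * rN else 0) := by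
      intro i; rw [hvval i j]; by_cases h : j = i <;> simp [h] <;> ring
    rw [Finset.sum_congr rfl (fun i _ => h1 i), Finset.sum_add_distrib, ← Finset.sum_mul,
      hsum_c, Finset.sum_ite_eq Finset.univ j (fun i => c i * rN)]
    simp only [Finset.mem_univ, if_true]
    rw [hcdef]
    field_simp
    ring
  have hc2 : ∀ i, 2 ≤ c i := by
    intro i
    have hxl := hxlow i
    have hw2i := hw2 i
    have hpmi := hpm i
    have hpci := hpcoord i
    have hstep2 : rN * (ε/2) ≤ (P - rT) * p i := by
      have h1 : rN ≤ P - rT := by rw [hPdef]; linarith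
      nlinarith
    have hP3 : P ≤ 3 * rT := by nlinarith
    have hstep3 : P * (ε^2/1000) ≤ 3*(ε^2*rT)/1000 := by nlinarith
    have hstep4 : ε^2*rT/32 ≤ rN*(ε/2) := by nlinarith
    have hstep5 : (1:ℝ) ≤ ε^2*rT/2000 := by nlinarith
    have hcore : ε^2*rT/40 ≤ (P - rT) * p i - P * (ε^2/1000) - 1 := by linarith
    have hmain : t * (ε^2*rT/40) ≤ P * x i - t * ((w i : ℕ):ℝ) := by
      have h1 : P * (t * (p i - ε^2/1000)) ≤ P * x i :=
        mul_le_mul_of_nonneg_left hxl hPpos.le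
      have h2 : t * ((w i : ℕ):ℝ) ≤ t * (rT * p i + 1) :=
        mul_le_mul_of_nonneg_left hw2i htpos.le
      have h3 := mul_le_mul_of_nonneg_left hcore htpos.le
      nlinarith
    have hfin : 2 * rN * P ≤ P * x i - t * ((w i : ℕ):ℝ) := by
      have h8 : 2*rN*P ≤ (3/4)*ε*rT^2 := by nlinarith
      have ht' : 64*rT/ε ≤ t := ht64
      have h9 : (3/4)*ε*rT^2 ≤ t * (ε^2*rT/40) := by
        have he : 64*rT/ε * ε = 64 * rT := by field_simp
        nlinarith [mul_le_mul_of_nonneg_right ht' (by positivity : (0:ℝ) ≤ ε^2*rT/40)]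
      linarith
    have hdiv : 2 * rN ≤ x i - s * ((w i : ℕ):ℝ) := by
      have heq : x i - s * ((w i : ℕ):ℝ) = (P * x i - t * ((w i : ℕ):ℝ))/P := by
        rw [hsdef]; field_simp
      rw [heq, le_div_iff₀ hPpos]
      nlinarith
    rw [hcdef]
    rw [le_div_iff₀ hNpos]
    simpa using hdiv
  have hcnonneg : ∀ i, 0 ≤ c i := fun i => le_trans (by norm_num) (hc2 i)
  set m : Fin (n+1) → ℕ := fun i => ⌊c i⌋₊ - 1 with hmdef
  have hfl1 : ∀ i, 2 ≤ ⌊c i⌋₊ := by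
    intro i
    have h2 : ((2:ℕ):ℝ) ≤ c i := by push_cast; linarith [hc2 i]
    exact Nat.le_floor h2
  have hmcast : ∀ i, (m i : ℝ) = (⌊c i⌋₊ : ℝ) - 1 := by
    intro i
    have h1 : 1 ≤ ⌊c i⌋₊ := le_trans (by norm_num) (hfl1 i)
    have h2 : m i = ⌊c i⌋₊ - 1 := rfl
    rw [h2, Nat.cast_sub h1]
    norm_num
  have hm_le : ∀ i, (m i : ℝ) ≤ c i - 1 := by
    intro i
    rw [hmcast i]
    have := Nat.floor_le (hcnonneg i)
    linarith
  have hm_ge : ∀ i, c i - 2 ≤ (m i : ℝ) := by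
    intro i
    rw [hmcast i]
    have := Nat.lt_floor_add_one (c i)
    linarith
  have hm0 : ∀ i, (0:ℝ) ≤ (m i : ℝ) := fun i => Nat.cast_nonneg _
  set θf : Fin (n+1) → ℝ := fun i => c i - (m i : ℝ) with hθdef
  have hθ1 : ∀ i, 1 ≤ θf i := fun i => by rw [hθdef]; simp; linarith [hm_le i]
  have hθ2 : ∀ i, θf i ≤ 2 := fun i => by rw [hθdef]; simp; linarith [hm_ge i]
  clear_value c m θf
  have hvnn : ∀ i j, (0:ℝ) ≤ ((v i j : ℕ):ℝ) := fun i j => Nat.cast_nonneg _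
  have hrsub : ∀ j, (∑ i, m i * v i j) ≤ β j := by
    intro j
    have hreal : ((∑ i, m i * v i j : ℕ):ℝ) ≤ ((β j : ℕ):ℝ) := by
      push_cast
      calc ∑ i, (m i:ℝ) * ((v i j : ℕ):ℝ) ≤ ∑ i, c i * ((v i j : ℕ):ℝ) := by
            apply Finset.sum_le_sum
            intro i _
            exact mul_le_mul_of_nonneg_right (by linarith [hm_le i]) (hvnn i j)
        _ = x j := hkey j
        _ = ((β j : ℕ):ℝ) := rfl
    exact_mod_cast hreal
  set r : Fin (n+1) → ℕ := fun j => β j - ∑ i, m i * v i j with hrdef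
  have hβdec : β = (∑ i, m i • v i) + r := by
    funext j
    have hsa : (∑ i, m i • v i) j = ∑ i, m i * v i j := by
      rw [Finset.sum_apply]
      rfl
    show β j = (∑ i, m i • v i) j + r j
    have hrj : r j = β j - ∑ i, m i * v i j := rfl
    rw [hsa, hrj]
    have := hrsub j
    omega
  have hxr : ∀ j, ((r j : ℕ):ℝ) = ∑ i, θf i * ((v i j : ℕ):ℝ) := by
    intro j
    have h1 : ((r j : ℕ):ℝ) = ((β j : ℕ):ℝ) - ∑ i, (m i:ℝ)*((v i j : ℕ):ℝ) := by
      rw [hrdef]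
      push_cast [Nat.cast_sub (hrsub j)]
      ring
    have h2 : ((β j : ℕ):ℝ) = x j := rfl
    rw [h1, h2, ← hkey j, ← Finset.sum_sub_distrib]
    apply Finset.sum_congr rfl
    intro i _
    rw [hθdef]
    ring
  clear_value r
  have hτformula : coordSum n (toR n r) = (∑ i, θf i) * P := by
    have h1 : coordSum n (toR n r) = ∑ j, ((r j : ℕ):ℝ) := rfl
    rw [h1]
    calc ∑ j, ((r j : ℕ):ℝ) = ∑ j, ∑ i, θf i * ((v i j : ℕ):ℝ) :=
          Finset.sum_congr rfl (fun j _ => hxr j)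
      _ = ∑ i, ∑ j, θf i * ((v i j : ℕ):ℝ) := Finset.sum_comm
      _ = ∑ i, θf i * (∑ j, ((v i j : ℕ):ℝ)) := by
          apply Finset.sum_congr rfl; intro i _; rw [Finset.mul_sum]
      _ = ∑ i, θf i * P := by
          apply Finset.sum_congr rfl; intro i _; rw [← hσv i]; rfl
      _ = (∑ i, θf i) * P := by rw [Finset.sum_mul]
  have hθsum_ub : ∑ i, θf i ≤ 2*((n:ℝ)+1) := by
    calc ∑ i, θf i ≤ ∑ _i : Fin (n+1), (2:ℝ) := Finset.sum_le_sum fun i _ => hθ2 i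
      _ = 2*((n:ℝ)+1) := by simp [Finset.sum_const, Finset.card_univ]; ring
  have hτle : coordSum n (toR n r) ≤ R0 := by
    rw [hτformula]
    calc (∑ i, θf i) * P ≤ 2*((n:ℝ)+1) * P := mul_le_mul_of_nonneg_right hθsum_ub hPpos.le
      _ ≤ R0 := hR0
  have hrvec : toR n r = ∑ i, θf i • toR n (v i) := by
    ext j
    rw [toR_apply, hxr j]
    rw [WithLp.ofLp_sum, Finset.sum_apply]
    apply Finset.sum_congr rfl
    intro i _
    rw [PiLp.smul_apply, toR_apply, smul_eq_mul]
  have hrO : toR n r ∈ O := by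
    rw [hrvec]
    have hgen : ∀ S : Finset (Fin (n+1)), (hS : S.Nonempty) → (∑ i ∈ S, θf i • toR n (v i)) ∈ O := by
      intro S hS
      induction hS using Finset.Nonempty.cons_induction with
      | singleton a =>
        simpa using hO_cone _ (lt_of_lt_of_le one_pos (hθ1 a)) _ (hvS a).1
      | cons a S' ha hne ihs =>
        rw [Finset.sum_cons]
        exact add_mem_O hO_conv hO_cone
          (hO_cone _ (lt_of_lt_of_le one_pos (hθ1 a)) _ (hvS a).1) ihs
    exact hgen Finset.univ Finset.univ_nonempty
  have hrnorm : M ≤ ‖toR n r‖ := by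
    have h0 : M ≤ ‖toR n (v 0)‖ :=
      le_of_not_gt fun h => (hvS 0).2 (mem_ball_zero_iff.mpr h)
    refine h0.trans (norm_mono_nonneg _ _ (fun j => hvnn 0 j) ?_)
    intro j
    rw [toR_apply, toR_apply, hxr j]
    calc ((v 0 j : ℕ):ℝ) ≤ θf 0 * ((v 0 j : ℕ):ℝ) := by
          nlinarith [hθ1 0, hvnn 0 j]
      _ ≤ ∑ i, θf i * ((v i j : ℕ):ℝ) := Finset.single_le_sum
          (f := fun i => θf i * ((v i j : ℕ):ℝ))
          (fun i _ => mul_nonneg (by linarith [hθ1 i]) (hvnn i j)) (Finset.mem_univ 0)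
  have hrS : toR n r ∈ O \ ball 0 M :=
    ⟨hrO, fun hb => absurd (mem_ball_zero_iff.mp hb) (not_lt.mpr hrnorm)⟩
  have hrF : F r ≤ B₁ := by
    apply hB₁
    intro j
    have h1 : ((r j : ℕ):ℝ) ≤ coordSum n (toR n r) :=
      Finset.single_le_sum (f := fun j => ((r j : ℕ):ℝ))
        (fun j _ => Nat.cast_nonneg _) (Finset.mem_univ j)
    exact h1.trans hτle
  obtain ⟨-, hchain⟩ := chain_sum hO_conv hO_cone hO_orth hM hsub v m hvS hrS
  rw [← hβdec] at hchain
  have hsF : ∑ i, (m i:ℝ) * F (v i) ≤ s * Fmax := by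
    calc ∑ i, (m i:ℝ) * F (v i) ≤ ∑ i, c i * Fmax := by
          apply Finset.sum_le_sum
          intro i _
          calc (m i:ℝ) * F (v i) ≤ (m i:ℝ) * Fmax :=
                mul_le_mul_of_nonneg_left (hFmaxi i) (hm0 i)
            _ ≤ c i * Fmax := mul_le_mul_of_nonneg_right (by linarith [hm_le i]) hFmax0
      _ = s * Fmax := by rw [← Finset.sum_mul, hsum_c]
  have hP1 : (1:ℝ) ≤ P := by nlinarith
  have hst : s ≤ t := by
    rw [hsdef]
    exact div_le_self htpos.le hP1
  calc F β ≤ ∑ i, (m i:ℝ) * F (v i) + F r := hchain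
    _ ≤ s * Fmax + B₁ := by linarith
    _ ≤ t * Fmax + t * 1 := by
        have h1 : s * Fmax ≤ t * Fmax := mul_le_mul_of_nonneg_right hst hFmax0
        have h2 : B₁ ≤ t := le_trans (le_abs_self B₁) (by linarith)
        linarith
    _ = (Fmax + 1) * t := by ring


set_option maxHeartbeats 1000000 in
lemma UB (hO_conv : Convex ℝ O) (hO_cone : ∀ c : ℝ, 0 < c → ∀ x ∈ O, c • x ∈ O)
    (hO_orth : O ⊆ {x | ∀ i, 0 ≤ x i}) (hM : 0 < M)
    (hsub : ∀ α β : Fin (n + 1) → ℕ, toR n α ∈ O \ ball 0 M → toR n β ∈ O \ ball 0 M →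
      F (α + β) ≤ F α + F β)
    {p : EuclideanSpace ℝ (Fin (n+1))} {ε : ℝ} (hε : 0 < ε) (hε1 : ε ≤ 1)
    (hball : ball p ε ⊆ O) (hp1 : coordSum n p = 1) :
    ∃ D T₁ : ℝ, 0 ≤ D ∧ 1 ≤ T₁ ∧ ∀ β : Fin (n+1) → ℕ, toR n β ∈ O \ ball 0 M →
      T₁ ≤ coordSum n (toR n β) →
      ‖(coordSum n (toR n β))⁻¹ • toR n β - p‖ ≤ ε^2/1000 →
      F β ≤ D * coordSum n (toR n β) := by
  classical
  have hporth : ∀ i, 0 ≤ p i := hO_orth (hball (mem_ball_self hε))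
  have hpnorm : ‖p‖ ≤ 1 := by rw [← hp1]; exact norm_le_csum p hporth
  have hpcoord : ∀ i, p i ≤ 1 :=
    fun i => ((le_abs_self _).trans (coord_abs_le_norm p i)).trans hpnorm
  have hpm : ∀ i, ε/2 ≤ p i := by
    intro i
    have hmem : p - (ε/2) • EuclideanSpace.single i (1:ℝ) ∈ ball p ε := by
      rw [mem_ball, dist_eq_norm]
      have : p - (ε/2) • EuclideanSpace.single i (1:ℝ) - p
          = -((ε/2) • EuclideanSpace.single i (1:ℝ)) := by abel
      rw [this, norm_neg, norm_smul, EuclideanSpace.norm_single]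
      simp only [norm_one, mul_one, Real.norm_eq_abs]
      rw [abs_of_pos (by linarith)]
      linarith
    have h0 := hO_orth (hball hmem) i
    have : (p - (ε/2) • EuclideanSpace.single i (1:ℝ)) i = p i - ε/2 := by
      simp [EuclideanSpace.single_apply]
    rw [this] at h0
    linarith
  -- choose the scale T
  obtain ⟨T, hTge⟩ := exists_nat_ge (2000*((n:ℝ)+1)/ε^2 + 16/ε + ((n:ℝ)+1) + ((n:ℝ)+1)*M)
  set rT : ℝ := (T:ℝ) with hrT
  have hterms : 0 ≤ 2000*((n:ℝ)+1)/ε^2 ∧ 0 ≤ 16/ε ∧ 0 ≤ ((n:ℝ)+1) ∧ 0 ≤ ((n:ℝ)+1)*M := by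
    refine ⟨by positivity, by positivity, by positivity, by positivity⟩
  have hTa : 2000*((n:ℝ)+1) ≤ ε^2 * rT := by
    have h1 : 2000*((n:ℝ)+1)/ε^2 ≤ rT := by linarith [hterms.1, hterms.2.1, hterms.2.2.1, hterms.2.2.2, hTge]
    calc 2000*((n:ℝ)+1) = (2000*((n:ℝ)+1)/ε^2) * ε^2 := by field_simp
      _ ≤ rT * ε^2 := by nlinarith [sq_nonneg ε, hε]
      _ = ε^2 * rT := by ring
  have hTb : 16 ≤ ε * rT := by
    have h1 : 16/ε ≤ rT := by linarith [hterms.1, hterms.2.1, hterms.2.2.1, hterms.2.2.2, hTge]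
    calc (16:ℝ) = (16/ε) * ε := by field_simp
      _ ≤ rT * ε := by nlinarith
      _ = ε * rT := by ring
  have hTc : ((n:ℝ)+1) ≤ rT := by linarith [hterms.1, hterms.2.1, hterms.2.2.1, hterms.2.2.2, hTge]
  have hTd : ((n:ℝ)+1)*M ≤ rT := by linarith [hterms.1, hterms.2.1, hterms.2.2.1, hterms.2.2.2, hTge]
  have hTpos : 0 < rT := by nlinarith
  -- the generators
  set w : Fin (n+1) → ℕ := fun i => ⌈rT * p i⌉₊ with hwdef
  set N : ℕ := ⌈ε*rT/16⌉₊ with hNdef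
  set rN : ℝ := (N:ℝ) with hrN
  set v : Fin (n+1) → (Fin (n+1) → ℕ) := fun i j => w j + if j = i then N else 0 with hvdef
  set ws : EuclideanSpace ℝ (Fin (n+1)) := toR n w with hwsdef
  set σw : ℝ := coordSum n ws with hσwdef
  have hw1 : ∀ i, rT * p i ≤ ws i := fun i => Nat.le_ceil _
  have hw2 : ∀ i, ws i ≤ rT * p i + 1 := by
    intro i
    exact le_of_lt (Nat.ceil_lt_add_one (mul_nonneg hTpos.le (hporth i)))
  have hws_nonneg : ∀ i, 0 ≤ ws i := fun i => le_trans (mul_nonneg hTpos.le (hporth i)) (hw1 i)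
  have hσw1 : rT ≤ σw := by
    have : ∑ i, rT * p i ≤ ∑ i, ws i := Finset.sum_le_sum fun i _ => hw1 i
    calc rT = rT * coordSum n p := by rw [hp1]; ring
      _ = ∑ i, rT * p i := by unfold coordSum; rw [Finset.mul_sum]
      _ ≤ ∑ i, ws i := this
      _ = σw := rfl
  have hσw2 : σw ≤ rT + ((n:ℝ)+1) := by
    have : ∑ i, ws i ≤ ∑ i, (rT * p i + 1) := Finset.sum_le_sum fun i _ => hw2 i
    calc σw = ∑ i, ws i := rfl
      _ ≤ ∑ i, (rT * p i + 1) := this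
      _ = rT * coordSum n p + ((n:ℝ)+1) := by
          unfold coordSum; rw [Finset.sum_add_distrib, Finset.mul_sum]; simp
      _ = rT + ((n:ℝ)+1) := by rw [hp1]; ring
  have hN1 : ε*rT/16 ≤ rN := Nat.le_ceil _
  have hN2 : rN ≤ ε*rT/16 + 1 :=
    le_of_lt (by exact_mod_cast Nat.ceil_lt_add_one (by nlinarith : (0:ℝ) ≤ ε*rT/16))
  have hone : (1:ℝ) ≤ ε*rT/16 := by linarith
  have hN2' : rN ≤ ε*rT/8 := by linarith
  have hNpos : 0 < rN := by linarith
  have hNrT : rN ≤ rT := by nlinarith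
  have hvR : ∀ i, toR n (v i) = ws + rN • EuclideanSpace.single i (1:ℝ) := by
    intro i; ext j
    simp only [hvdef, toR_apply]
    have : (ws + rN • EuclideanSpace.single i (1:ℝ)) j
        = ws j + rN * (if j = i then 1 else 0) := by
      simp [EuclideanSpace.single_apply]
    rw [this]
    by_cases h : j = i <;> simp [h, hwsdef, toR_apply, hrN]
  set P : ℝ := σw + rN with hPdef
  have hσv : ∀ i, coordSum n (toR n (v i)) = P := by
    intro i
    rw [hvR, csum_add, csum_smul, csum_single]
    simp [hPdef, hσwdef]
  have hPlow : rT + rN ≤ P := by simp [hPdef]; linarith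
  have hPhigh : P ≤ rT + ((n:ℝ)+1) + rN := by simp [hPdef]; linarith
  have hPpos : 0 < P := by linarith
  have hE1 : ‖ws - rT • p‖ ≤ ((n:ℝ)+1) := by
    have := norm_le_of_coords (x := ws - rT • p) 1 (by norm_num) (by
      intro i
      have h1 := hw1 i; have h2 := hw2 i
      have : (ws - rT • p) i = ws i - rT * p i := by
        simp [PiLp.sub_apply, PiLp.smul_apply]
      rw [this, abs_le]
      constructor <;> linarith)
    simpa using this
  clear_value v w N ws σw P
  have hvdir : ∀ i, ‖P⁻¹ • toR n (v i) - p‖ < ε := by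
    intro i
    have hkey : P⁻¹ • toR n (v i) - p
        = P⁻¹ • ((ws - rT • p) + rN • (EuclideanSpace.single i (1:ℝ) - p)
            + (rT + rN - P) • p) := by
      rw [hvR i]
      have hP0 : P ≠ 0 := ne_of_gt hPpos
      match_scalars <;> (field_simp; try ring)
    rw [hkey]
    have hsingle : ‖EuclideanSpace.single i (1:ℝ) - p‖ ≤ 2 := by
      calc ‖EuclideanSpace.single i (1:ℝ) - p‖
          ≤ ‖EuclideanSpace.single i (1:ℝ)‖ + ‖p‖ := norm_sub_le _ _
        _ ≤ 1 + 1 := by rw [EuclideanSpace.norm_single]; simp; exact hpnorm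
        _ = 2 := by norm_num
    have habs : |rT + rN - P| ≤ ((n:ℝ)+1) := by
      rw [abs_le]; constructor <;> [skip; skip] <;> simp [hPdef] <;> linarith
    have hbound : ‖(ws - rT • p) + rN • (EuclideanSpace.single i (1:ℝ) - p)
        + (rT + rN - P) • p‖ ≤ 2*((n:ℝ)+1) + 2*rN := by
      calc ‖(ws - rT • p) + rN • (EuclideanSpace.single i (1:ℝ) - p) + (rT + rN - P) • p‖
          ≤ ‖ws - rT • p‖ + ‖rN • (EuclideanSpace.single i (1:ℝ) - p)‖
            + ‖(rT + rN - P) • p‖ := norm_add₃_le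
        _ ≤ ((n:ℝ)+1) + rN * 2 + ((n:ℝ)+1) * 1 := by
            refine add_le_add (add_le_add hE1 ?_) ?_
            · rw [norm_smul, Real.norm_eq_abs, abs_of_pos hNpos]
              nlinarith [hsingle, hNpos]
            · rw [norm_smul, Real.norm_eq_abs]
              nlinarith [habs, norm_nonneg p, hpnorm, abs_nonneg (rT + rN - P)]
        _ = 2*((n:ℝ)+1) + 2*rN := by ring
    rw [norm_smul, Real.norm_eq_abs, abs_of_pos (inv_pos.mpr hPpos)]
    have hnum : 2*((n:ℝ)+1) + 2*rN < ε * P := by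
      have h1 : 2*((n:ℝ)+1) ≤ ε*rT/1000 := by nlinarith
      have h2 : 2*rN ≤ ε*rT/4 := by linarith
      have h3 : ε*rT < ε*P := by
        have : rT < P := by nlinarith
        nlinarith
      nlinarith
    calc P⁻¹ * ‖(ws - rT • p) + rN • (EuclideanSpace.single i (1:ℝ) - p) + (rT + rN - P) • p‖
        ≤ P⁻¹ * (2*((n:ℝ)+1) + 2*rN) := by
          apply mul_le_mul_of_nonneg_left hbound (le_of_lt (inv_pos.mpr hPpos))
      _ < P⁻¹ * (ε * P) := by
          apply mul_lt_mul_of_pos_left hnum (inv_pos.mpr hPpos)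
      _ = ε := by field_simp
  have hvS : ∀ i, toR n (v i) ∈ O \ ball 0 M := by
    intro i
    constructor
    · exact Omem hO_cone hball _ P hPpos (by rw [← hσv i] at hvdir ⊢; exact hvdir i)
    · intro hb
      rw [mem_ball_zero_iff] at hb
      have h1 : P ≤ ((n:ℝ)+1) * ‖toR n (v i)‖ := by
        rw [← hσv i]; exact csum_le_norm _
      have h2 : ((n:ℝ)+1) * M ≤ P := le_trans hTd (by linarith)
      have hn1 : (0:ℝ) < (n:ℝ)+1 := by positivity
      nlinarith
  -- bound for remainders
  set R0 : ℕ := 2*(n+1)*(T + (n+1) + N) with hR0def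
  have hR0 : 2*((n:ℝ)+1)*P ≤ ((R0:ℕ):ℝ) := by
    have h2 : ((R0:ℕ):ℝ) = 2*((n:ℝ)+1)*(rT + ((n:ℝ)+1) + rN) := by
      rw [hrT, hrN]; push_cast [hR0def]; ring
    rw [h2]
    exact mul_le_mul_of_nonneg_left hPhigh (by positivity)
  obtain ⟨B₁, hB₁⟩ : ∃ B₁ : ℝ, ∀ γ : Fin (n+1) → ℕ, (∀ j, γ j ≤ R0) → F γ ≤ B₁ := by
    refine ⟨(Fintype.piFinset fun _ : Fin (n+1) => Finset.range (R0+1)).sup'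
      ⟨fun _ => 0, by simp⟩ F, ?_⟩
    intro γ hγ
    apply Finset.le_sup'
    rw [Fintype.mem_piFinset]
    intro j
    rw [Finset.mem_range]
    exact Nat.lt_succ_of_le (hγ j)
  set Fmax : ℝ := max 0 (Finset.univ.sup' ⟨0, Finset.mem_univ 0⟩ fun i => F (v i)) with hFmaxdef
  have hFmax0 : 0 ≤ Fmax := le_max_left _ _
  have hFmaxi : ∀ i, F (v i) ≤ Fmax :=
    fun i => le_trans (Finset.le_sup' (fun i => F (v i)) (Finset.mem_univ i)) (le_max_right _ _)
  refine ⟨Fmax + 1, max (max (64*rT/ε) (|B₁| + 1)) 1, by linarith, le_max_right _ _, ?_⟩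
  intro β hβS ht hdir
  have hw2' : ∀ i, ((w i : ℕ):ℝ) ≤ rT * p i + 1 := by
    intro i
    have h := hw2 i
    have heq : ws i = ((w i : ℕ):ℝ) := by rw [hwsdef]; rfl
    rwa [heq] at h
  have hvval : ∀ i j, ((v i j : ℕ):ℝ) = ((w j : ℕ):ℝ) + (if j = i then rN else 0) := by
    intro i j
    rw [hvdef]
    by_cases h : j = i <;> simp [h, hrN]
  have hwsum : coordSum n (toR n w) = σw := by rw [hσwdef, hwsdef]
  have hB₁' : ∀ γ : Fin (n+1) → ℕ, (∀ j, ((γ j : ℕ):ℝ) ≤ ((R0:ℕ):ℝ)) → F γ ≤ B₁ := by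
    intro γ hγ
    exact hB₁ γ (fun j => by exact_mod_cast hγ j)
  have ht64 : 64*rT/ε ≤ coordSum n (toR n β) :=
    le_trans (le_trans (le_max_left _ _) (le_max_left _ _)) ht
  have htB : |B₁| + 1 ≤ coordSum n (toR n β) :=
    le_trans (le_trans (le_max_right _ _) (le_max_left _ _)) ht
  exact UBcore hO_conv hO_cone hO_orth hM hsub hε hε1 hpm hpcoord rT rN P σw hTpos hNpos
    hTa hTb hTc hN1 hN2' hσw1 hPdef hPhigh hPpos w hwsum hw2' v hvval hvS hσv
    ((R0:ℕ):ℝ) hR0 B₁ hB₁' Fmax hFmax0 hFmaxi β hβS ht64 htB hdir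



set_option maxHeartbeats 2000000 in
lemma main_conv (hO_conv : Convex ℝ O) (hO_cone : ∀ c : ℝ, 0 < c → ∀ x ∈ O, c • x ∈ O)
    (hO_orth : O ⊆ {x | ∀ i, 0 ≤ x i}) (hM : 0 < M)
    (hsub : ∀ α β : Fin (n + 1) → ℕ, toR n α ∈ O \ ball 0 M → toR n β ∈ O \ ball 0 M →
      F (α + β) ≤ F α + F β)
    (C : ℝ)
    (hlow : ∀ β : Fin (n + 1) → ℕ, toR n β ∈ O \ ball 0 M →
      C * coordSum n (toR n β) ≤ F β)
    {p : EuclideanSpace ℝ (Fin (n+1))} {ε : ℝ} (hε : 0 < ε) (hε1 : ε ≤ 1)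
    (hball : ball p ε ⊆ O) (hp1 : coordSum n p = 1)
    (α : ℕ → (Fin (n+1) → ℕ))
    (hS : ∀ k, toR n (α k) ∈ O \ ball 0 M)
    (htt : Tendsto (fun k => coordSum n (toR n (α k))) atTop atTop)
    (hd : Tendsto (fun k => (coordSum n (toR n (α k)))⁻¹ • toR n (α k)) atTop (nhds p)) :
    ∃ L, Tendsto (fun k => F (α k) / coordSum n (toR n (α k))) atTop (nhds L) := by
  obtain ⟨D, T₁, hD0, hT11, hUB⟩ := UB hO_conv hO_cone hO_orth hM hsub hε hε1 hball hp1
  set t : ℕ → ℝ := fun k => coordSum n (toR n (α k)) with htdef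
  set u : ℕ → ℝ := fun k => F (α k) / t k with hudef
  have hxnn : ∀ k i, (0:ℝ) ≤ toR n (α k) i := fun k i => Nat.cast_nonneg _
  have htpos : ∀ k, 0 < t k := by
    intro k
    have h1 : M ≤ ‖toR n (α k)‖ := le_of_not_gt fun h => (hS k).2 (mem_ball_zero_iff.mpr h)
    have h2 := norm_le_csum (toR n (α k)) (hxnn k)
    calc (0:ℝ) < M := hM
      _ ≤ t k := le_trans h1 h2
  have hu_low : ∀ k, C ≤ u k := by
    intro k
    rw [hudef]
    simp only []
    rw [le_div_iff₀ (htpos k)]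
    exact hlow (α k) (hS k)
  have hdir : ∀ δ : ℝ, 0 < δ → ∀ᶠ k in atTop, ‖(t k)⁻¹ • toR n (α k) - p‖ ≤ δ := by
    intro δ hδ
    have h := Metric.tendsto_nhds.mp hd δ hδ
    filter_upwards [h] with k hk
    rw [dist_eq_norm] at hk
    exact hk.le
  have htlarge : ∀ b : ℝ, ∀ᶠ k in atTop, b ≤ t k := fun b => htt.eventually_ge_atTop b
  have hη : (0:ℝ) < ε^2/1000 := by positivity
  have hu_upE : ∀ᶠ k in atTop, u k ≤ D := by
    filter_upwards [hdir (ε^2/1000) hη, htlarge T₁] with k h1 h2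
    rw [hudef]
    simp only []
    rw [div_le_iff₀ (htpos k)]
    calc F (α k) ≤ D * coordSum n (toR n (α k)) := hUB (α k) (hS k) h2 h1
      _ = D * t k := rfl
  have hkey : ∀ θ : ℝ, 0 < θ → θ ≤ 1/2 →
      ∃ K : ℕ, ∀ k, K ≤ k → ∀ᶠ j in atTop, u j ≤ u k + θ * (2*(D - C)) := by
    intro θ hθ0 hθh
    have hcond : ∀ᶠ k in atTop, (‖(t k)⁻¹ • toR n (α k) - p‖ ≤ θ * (ε^2/1000) / 2
        ∧ T₁ ≤ t k) ∧ u k ≤ D := by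
      filter_upwards [hdir (θ * (ε^2/1000) / 2) (by positivity), htlarge T₁, hu_upE]
        with k h1 h2 h3
      exact ⟨⟨h1, h2⟩, h3⟩
    obtain ⟨K, hK⟩ := eventually_atTop.mp hcond
    refine ⟨K, fun k hk => ?_⟩
    obtain ⟨⟨hkdir, hkT⟩, hkD⟩ := hK k hk
    set σ : ℝ := t k with hσdef
    have hσpos : 0 < σ := htpos k
    have hDC : (0:ℝ) ≤ D - C := by linarith [hu_low k]
    filter_upwards [hdir (θ * (ε^2/1000) / 2) (by positivity : (0:ℝ) < θ * (ε^2/1000) / 2),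
      htlarge (max (max (T₁/θ) (2*σ/θ)) (((n:ℝ)+1)*M/θ))] with j hjdir hjT
    have htj := htpos j
    have hjT1 : T₁/θ ≤ t j := le_trans (le_trans (le_max_left _ _) (le_max_left _ _)) hjT
    have hjT2 : 2*σ/θ ≤ t j := le_trans (le_trans (le_max_right _ _) (le_max_left _ _)) hjT
    have hjT3 : ((n:ℝ)+1)*M/θ ≤ t j := le_trans (le_max_right _ _) hjT
    set m : ℕ := ⌊(1-θ)*(t j)/σ⌋₊ with hmdef
    have hfrac_nn : (0:ℝ) ≤ (1-θ)*(t j)/σ := by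
      apply div_nonneg _ hσpos.le
      nlinarith
    have hm1 : (m:ℝ)*σ ≤ (1-θ)*(t j) := by
      have h := Nat.floor_le hfrac_nn
      calc (m:ℝ)*σ ≤ ((1-θ)*(t j)/σ)*σ := mul_le_mul_of_nonneg_right h hσpos.le
        _ = (1-θ)*(t j) := by field_simp
    have hm2 : (1-θ)*(t j) - σ ≤ (m:ℝ)*σ := by
      have h := Nat.lt_floor_add_one ((1-θ)*(t j)/σ)
      have h2 : (1-θ)*(t j)/σ < (m:ℝ) + 1 := by exact_mod_cast h
      have h3 : (1-θ)*(t j) < ((m:ℝ)+1)*σ := by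
        rw [div_lt_iff₀ hσpos] at h2
        linarith
      linarith
    set τ : ℝ := t j - m*σ with hτdef
    have hτ1 : θ*(t j) ≤ τ := by rw [hτdef]; nlinarith
    have hτpos : 0 < τ := lt_of_lt_of_le (by positivity) hτ1
    have hτ2 : τ ≤ θ*(t j) + σ := by rw [hτdef]; nlinarith
    have hσsmall : σ ≤ θ*(t j)/2 := by
      rw [div_le_iff₀ hθ0] at hjT2
      nlinarith
    have hτ3 : τ ≤ (3/2)*θ*(t j) := by linarith
    have hmσtj : (m:ℝ)*σ ≤ t j := by nlinarith
    set rR : EuclideanSpace ℝ (Fin (n+1)) := toR n (α j) - (m:ℝ) • toR n (α k) with hrRdef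
    have hrcsum : coordSum n rR = τ := by
      rw [hrRdef, csum_sub, csum_smul, hτdef]
    have hrdir : ‖τ⁻¹ • rR - p‖ ≤ ε^2/1000 := by
      have hid : τ⁻¹ • rR - p
          = τ⁻¹ • ((t j) • ((t j)⁻¹ • toR n (α j) - p)
            - ((m:ℝ)*σ) • (σ⁻¹ • toR n (α k) - p)) := by
        rw [hrRdef, hτdef]
        have hτ0 : t j - (m:ℝ)*σ ≠ 0 := by rw [← hτdef]; exact hτpos.ne'
        have hσ0 := hσpos.ne'
        have htj0 := htj.ne'
        match_scalars <;> (field_simp; try ring)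
      rw [hid, norm_smul, Real.norm_eq_abs, abs_of_pos (inv_pos.mpr hτpos)]
      have hb : ‖(t j) • ((t j)⁻¹ • toR n (α j) - p)
          - ((m:ℝ)*σ) • (σ⁻¹ • toR n (α k) - p)‖
          ≤ (t j) * (θ * (ε^2/1000) / 2) + ((m:ℝ)*σ) * (θ * (ε^2/1000) / 2) := by
        calc ‖(t j) • ((t j)⁻¹ • toR n (α j) - p) - ((m:ℝ)*σ) • (σ⁻¹ • toR n (α k) - p)‖
            ≤ ‖(t j) • ((t j)⁻¹ • toR n (α j) - p)‖
              + ‖((m:ℝ)*σ) • (σ⁻¹ • toR n (α k) - p)‖ := norm_sub_le _ _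
          _ ≤ (t j) * (θ * (ε^2/1000) / 2) + ((m:ℝ)*σ) * (θ * (ε^2/1000) / 2) := by
              apply add_le_add
              · rw [norm_smul, Real.norm_eq_abs, abs_of_pos htj]
                exact mul_le_mul_of_nonneg_left hjdir htj.le
              · rw [norm_smul, Real.norm_eq_abs,
                  abs_of_nonneg (by positivity : (0:ℝ) ≤ (m:ℝ)*σ)]
                exact mul_le_mul_of_nonneg_left hkdir (by positivity)
      have hb2 : (t j) * (θ * (ε^2/1000) / 2) + ((m:ℝ)*σ) * (θ * (ε^2/1000) / 2)
          ≤ (ε^2/1000) * τ := by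
        have hA : (0:ℝ) ≤ θ * (ε^2/1000) / 2 := by positivity
        have : (t j) * (θ * (ε^2/1000) / 2) + ((m:ℝ)*σ) * (θ * (ε^2/1000) / 2)
            ≤ (2 * t j) * (θ * (ε^2/1000) / 2) := by
          have := mul_le_mul_of_nonneg_right hmσtj hA
          linarith
        calc (t j) * (θ * (ε^2/1000) / 2) + ((m:ℝ)*σ) * (θ * (ε^2/1000) / 2)
            ≤ (2 * t j) * (θ * (ε^2/1000) / 2) := this
          _ = (ε^2/1000) * (θ * t j) := by ring
          _ ≤ (ε^2/1000) * τ := mul_le_mul_of_nonneg_left hτ1 (by positivity)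
      calc τ⁻¹ * ‖(t j) • ((t j)⁻¹ • toR n (α j) - p) - ((m:ℝ)*σ) • (σ⁻¹ • toR n (α k) - p)‖
          ≤ τ⁻¹ * ((ε^2/1000) * τ) := by
            apply mul_le_mul_of_nonneg_left (le_trans hb hb2) (inv_pos.mpr hτpos).le
        _ = ε^2/1000 := by field_simp
    have hrO : rR ∈ O := by
      apply Omem hO_cone hball rR τ hτpos
      apply lt_of_le_of_lt hrdir
      nlinarith
    have hrnn : ∀ i, 0 ≤ rR i := fun i => hO_orth hrO i
    have hmle : ∀ i, m * (α k i) ≤ α j i := by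
      intro i
      have h1 := hrnn i
      have h2 : rR i = ((α j i : ℕ):ℝ) - (m:ℝ)*((α k i : ℕ):ℝ) := by
        rw [hrRdef]
        simp [PiLp.sub_apply, PiLp.smul_apply, toR_apply]
      rw [h2] at h1
      have h3 : ((m * α k i : ℕ):ℝ) ≤ ((α j i : ℕ):ℝ) := by push_cast; linarith
      exact_mod_cast h3
    set rN : Fin (n+1) → ℕ := fun i => α j i - m * α k i with hrNdef
    have hrNtoR : toR n rN = rR := by
      ext i
      rw [toR_apply]
      have h0 : rN i = α j i - m * α k i := rfl
      rw [h0, Nat.cast_sub (hmle i)]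
      have h2 : rR i = ((α j i : ℕ):ℝ) - (m:ℝ)*((α k i : ℕ):ℝ) := by
        rw [hrRdef]
        simp [PiLp.sub_apply, PiLp.smul_apply, toR_apply]
      rw [h2]
      push_cast
      ring
    have hrnorm : M ≤ ‖rR‖ := by
      have h1 : τ ≤ ((n:ℝ)+1) * ‖rR‖ := by rw [← hrcsum]; exact csum_le_norm rR
      have h2 : ((n:ℝ)+1)*M ≤ θ*(t j) := by
        rw [div_le_iff₀ hθ0] at hjT3
        nlinarith
      have h3 : ((n:ℝ)+1)*M ≤ ((n:ℝ)+1)*‖rR‖ := le_trans (h2.trans hτ1) h1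
      have hn1 : (0:ℝ) < (n:ℝ)+1 := by positivity
      nlinarith
    have hrS : toR n rN ∈ O \ ball 0 M := by
      rw [hrNtoR]
      exact ⟨hrO, fun hb => absurd (mem_ball_zero_iff.mp hb) (not_lt.mpr hrnorm)⟩
    have hdec : α j = m • (α k) + rN := by
      funext i
      show α j i = m * α k i + rN i
      have h1 := hmle i
      have h2 : rN i = α j i - m * α k i := rfl
      omega
    obtain ⟨-, hchain⟩ := chain_smul hO_conv hO_cone hO_orth hM hsub (hS k) hrS m
    rw [← hdec] at hchain
    have hFr : F rN ≤ D * τ := by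
      have h1 : T₁ ≤ coordSum n (toR n rN) := by
        rw [hrNtoR, hrcsum]
        have hT1θ : T₁ ≤ θ * (t j) := by
          rw [div_le_iff₀ hθ0] at hjT1
          nlinarith
        linarith
      have h2 : ‖(coordSum n (toR n rN))⁻¹ • toR n rN - p‖ ≤ ε^2/1000 := by
        rw [hrNtoR, hrcsum]
        exact hrdir
      have h3 := hUB rN hrS h1 h2
      rw [hrNtoR, hrcsum] at h3
      exact h3
    have hFk : F (α k) = σ * u k := by
      rw [hudef]
      simp only []
      rw [hσdef]
      have htk0 := (htpos k).ne'
      field_simp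
    have hmστ : (m:ℝ)*σ = t j - τ := by rw [hτdef]; ring
    rw [hudef]
    simp only []
    rw [div_le_iff₀ (htpos j)]
    have hukD : u k ≤ D := hkD
    have hukC : C ≤ u k := hu_low k
    have hterm : τ * (D - u k) ≤ ((3/2)*θ*(t j)) * (D - C) :=
      mul_le_mul hτ3 (by linarith) (by linarith) (by positivity)
    calc F (α j) ≤ (m:ℝ) * F (α k) + F rN := hchain
      _ ≤ (m:ℝ) * (σ * u k) + D * τ := by
          rw [← hFk]
          have : (0:ℝ) ≤ (m:ℝ) := Nat.cast_nonneg _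
          linarith [hFr]
      _ = (t j - τ)*(u k) + D * τ := by rw [← hmστ]; ring
      _ = (t j)*(u k) + τ*(D - u k) := by ring
      _ ≤ (t j)*(u k) + ((3/2)*θ*(t j))*(D - C) := by linarith
      _ ≤ (u k + θ * (2*(D - C))) * (t j) := by nlinarith
  -- conclude with liminf = limsup
  have hbddA : IsBoundedUnder (· ≤ ·) atTop u := ⟨D, eventually_map.mpr hu_upE⟩
  have hbddB : IsBoundedUnder (· ≥ ·) atTop u :=
    ⟨C, eventually_map.mpr (Eventually.of_forall hu_low)⟩
  have hself : liminf u atTop ≤ limsup u atTop := liminf_le_limsup hbddA hbddB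
  have hls : limsup u atTop ≤ liminf u atTop := by
    by_contra hcon
    push_neg at hcon
    set δ : ℝ := limsup u atTop - liminf u atTop with hδdef
    have hδ : 0 < δ := by simp [hδdef]; linarith
    set E : ℝ := 2*(D - C) with hEdef
    have hE0 : 0 ≤ E := by
      obtain ⟨k, hk⟩ := hu_upE.exists
      have := hu_low k
      rw [hEdef]
      linarith
    set θ : ℝ := min (1/2) (δ/(2*(E+1))) with hθdef
    have hθ0 : 0 < θ := by
      apply lt_min (by norm_num)
      positivity
    have hθh : θ ≤ 1/2 := min_le_left _ _
    obtain ⟨K, hK⟩ := hkey θ hθ0 hθh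
    have h1 : ∀ k, K ≤ k → limsup u atTop ≤ u k + θ*E := by
      intro k hk
      exact limsup_le_of_le hbddB.isCoboundedUnder_le (hK k hk)
    have h2 : limsup u atTop - θ*E ≤ liminf u atTop := by
      apply le_liminf_of_le hbddA.isCoboundedUnder_ge
      filter_upwards [eventually_ge_atTop K] with k hk
      linarith [h1 k hk]
    have h3 : θ*E < δ := by
      have hle : θ ≤ δ/(2*(E+1)) := min_le_right _ _
      have : θ*E ≤ (δ/(2*(E+1)))*E := mul_le_mul_of_nonneg_right hle hE0
      have h4 : (δ/(2*(E+1)))*E < δ := by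
        rw [div_mul_eq_mul_div, div_lt_iff₀ (by positivity : (0:ℝ) < 2*(E+1))]
        nlinarith
      linarith
    have : δ ≤ θ*E := by rw [hδdef]; linarith
    linarith
  refine ⟨limsup u atTop, ?_⟩
  have heq : liminf u atTop = limsup u atTop := le_antisymm hself hls
  exact tendsto_of_liminf_eq_limsup heq rfl hbddA hbddB


lemma tendsto_double : Tendsto (fun k : ℕ => 2*k) atTop atTop := by
  apply tendsto_atTop_atTop.mpr
  intro b
  exact ⟨b, fun a ha => by omega⟩

lemma tendsto_double_succ : Tendsto (fun k : ℕ => 2*k+1) atTop atTop := by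
  apply tendsto_atTop_atTop.mpr
  intro b
  exact ⟨b, fun a ha => by omega⟩

lemma tendsto_even_odd {X : Type*} {l : Filter X} (g : ℕ → X)
    (h1 : Tendsto (fun k => g (2*k)) atTop l) (h2 : Tendsto (fun k => g (2*k+1)) atTop l) :
    Tendsto g atTop l := by
  intro sset hs
  have e1 := h1 hs
  have e2 := h2 hs
  rw [mem_map, mem_atTop_sets] at e1 e2 ⊢
  obtain ⟨N1, hN1⟩ := e1
  obtain ⟨N2, hN2⟩ := e2
  refine ⟨2*(N1+N2)+2, ?_⟩
  intro k hk
  rcases Nat.even_or_odd k with ⟨j, hj⟩ | ⟨j, hj⟩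
  · have hj' : k = 2*j := by omega
    have : N1 ≤ j := by omega
    have := hN1 j this
    simpa [← hj'] using this
  · have hj' : k = 2*j+1 := by omega
    have : N2 ≤ j := by omega
    have := hN2 j this
    simpa [← hj'] using this


end SubAux

open SubAux in
/-- For a subadditive, linearly-bounded-below function `F` on
`S = (O \ B(0,M)) ∩ ℕ^{n+1}`, the limits `F(α(k))/|α(k)|` along sequences in `S` with
`|α(k)| → ∞` and `α(k)/|α(k)| → p` exist and depend only on `F` and `p`. -/
theorem limit_exists_of_subadditive (n : ℕ) (O : Set (EuclideanSpace ℝ (Fin (n + 1))))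
    (hO_open : IsOpen O) (hO_conv : Convex ℝ O) (hO_ne : O.Nonempty)
    (hO_orth : O ⊆ {x | ∀ i, 0 ≤ x i})
    (hO_cone : ∀ c : ℝ, 0 < c → ∀ x ∈ O, c • x ∈ O)
    (M : ℝ) (hM : 0 < M)
    (F : (Fin (n + 1) → ℕ) → ℝ)
    (hsub : ∀ α β : Fin (n + 1) → ℕ, toR n α ∈ O \ ball 0 M → toR n β ∈ O \ ball 0 M →
      F (α + β) ≤ F α + F β)
    (C : ℝ)
    (hlow : ∀ β : Fin (n + 1) → ℕ, toR n β ∈ O \ ball 0 M →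
      C * coordSum n (toR n β) ≤ F β) :
    ∀ p ∈ O, coordSum n p = 1 →
      ∃ L : ℝ, ∀ α : ℕ → (Fin (n + 1) → ℕ),
        (∀ k, toR n (α k) ∈ O \ ball 0 M) →
        Tendsto (fun k => coordSum n (toR n (α k))) atTop atTop →
        Tendsto (fun k => (coordSum n (toR n (α k)))⁻¹ • toR n (α k)) atTop (nhds p) →
        Tendsto (fun k => F (α k) / coordSum n (toR n (α k))) atTop (nhds L) := by
  intro p hp hp1
  obtain ⟨ε0, hε0, hball0⟩ := Metric.isOpen_iff.mp hO_open p hp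
  set ε : ℝ := min ε0 1 with hεdef
  have hε : 0 < ε := lt_min hε0 one_pos
  have hε1 : ε ≤ 1 := min_le_right _ _
  have hball : ball p ε ⊆ O := fun x hx => hball0 (mem_of_mem_of_subset hx
    (ball_subset_ball (min_le_left _ _)))
  by_cases hex : ∃ α : ℕ → (Fin (n+1) → ℕ), (∀ k, toR n (α k) ∈ O \ ball 0 M) ∧
      Tendsto (fun k => coordSum n (toR n (α k))) atTop atTop ∧
      Tendsto (fun k => (coordSum n (toR n (α k)))⁻¹ • toR n (α k)) atTop (nhds p)
  · obtain ⟨α₀, h01, h02, h03⟩ := hex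
    obtain ⟨L, hL⟩ := main_conv hO_conv hO_cone hO_orth hM hsub C hlow hε hε1 hball hp1
      α₀ h01 h02 h03
    refine ⟨L, ?_⟩
    intro α h1 h2 h3
    set γ : ℕ → (Fin (n+1) → ℕ) :=
      fun k => if k % 2 = 0 then α₀ (k/2) else α (k/2) with hγdef
    have hγe : ∀ k, γ (2*k) = α₀ k := by
      intro k
      have h : (2*k) % 2 = 0 := by omega
      have h' : (2*k)/2 = k := by omega
      simp [hγdef, h, h']
    have hγo : ∀ k, γ (2*k+1) = α k := by
      intro k
      have h : (2*k+1) % 2 = 1 := by omega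
      have h' : (2*k+1)/2 = k := by omega
      simp [hγdef, h, h']
    have hγ1 : ∀ k, toR n (γ k) ∈ O \ ball 0 M := by
      intro k
      have hrfl : γ k = if k % 2 = 0 then α₀ (k/2) else α (k/2) := rfl
      rw [hrfl]
      by_cases h : k % 2 = 0
      · rw [if_pos h]; exact h01 _
      · rw [if_neg h]; exact h1 _
    have hγ2 : Tendsto (fun k => coordSum n (toR n (γ k))) atTop atTop := by
      apply tendsto_even_odd
      · have : (fun k => coordSum n (toR n (γ (2*k)))) =
            (fun k => coordSum n (toR n (α₀ k))) := by
          funext k; rw [hγe k]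
        rw [this]; exact h02
      · have : (fun k => coordSum n (toR n (γ (2*k+1)))) =
            (fun k => coordSum n (toR n (α k))) := by
          funext k; rw [hγo k]
        rw [this]; exact h2
    have hγ3 : Tendsto (fun k => (coordSum n (toR n (γ k)))⁻¹ • toR n (γ k))
        atTop (nhds p) := by
      apply tendsto_even_odd
      · have : (fun k => (coordSum n (toR n (γ (2*k))))⁻¹ • toR n (γ (2*k))) =
            (fun k => (coordSum n (toR n (α₀ k)))⁻¹ • toR n (α₀ k)) := by
          funext k; rw [hγe k]
        rw [this]; exact h03
      · have : (fun k => (coordSum n (toR n (γ (2*k+1))))⁻¹ • toR n (γ (2*k+1))) =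
            (fun k => (coordSum n (toR n (α k)))⁻¹ • toR n (α k)) := by
          funext k; rw [hγo k]
        rw [this]; exact h3
    obtain ⟨L', hL'⟩ := main_conv hO_conv hO_cone hO_orth hM hsub C hlow hε hε1 hball hp1
      γ hγ1 hγ2 hγ3
    have hLeven : Tendsto (fun k => F (γ (2*k)) / coordSum n (toR n (γ (2*k))))
        atTop (nhds L') := hL'.comp tendsto_double
    have hLodd : Tendsto (fun k => F (γ (2*k+1)) / coordSum n (toR n (γ (2*k+1))))
        atTop (nhds L') := hL'.comp tendsto_double_succ
    have heq1 : (fun k => F (γ (2*k)) / coordSum n (toR n (γ (2*k)))) =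
        (fun k => F (α₀ k) / coordSum n (toR n (α₀ k))) := by
      funext k; rw [hγe k]
    have heq2 : (fun k => F (γ (2*k+1)) / coordSum n (toR n (γ (2*k+1)))) =
        (fun k => F (α k) / coordSum n (toR n (α k))) := by
      funext k; rw [hγo k]
    rw [heq1] at hLeven
    rw [heq2] at hLodd
    have : L' = L := tendsto_nhds_unique hLeven hL
    rwa [this] at hLodd
  · refine ⟨0, fun α h1 h2 h3 => absurd ⟨α, h1, h2, h3⟩ hex⟩
end
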